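/- arXiv:2512.08114 — 6 statements merged into one kernel-verified Lean document; each statement's English description precedes it below -/
import Mathlib

section
/- Let E be a Banach space over the field 𝕜 ∈ {ℝ, ℂ} and let 0 < δ < 2. Then for every x ∈ E with ‖x‖ = 1 and every y ∈ E with ‖y‖ ≤ 1 satisfying inf_{λ ∈ 𝕜, |λ| = 1} ‖x − λ·y‖ ≥ δ, there exists a continuous linear functional x* on E with ‖x*‖ = 1 such that | |x*(x)| − |x*(y)| | ≥ δ/3. -/
set_option maxHeartbeats 1000000


/-- Let `E` be a Banach space over `𝕜 ∈ {ℝ, ℂ}` and `0 < δ < 2`. For every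
`x ∈ E` with `‖x‖ = 1` and `y ∈ E` with `‖y‖ ≤ 1` satisfying
`inf_{‖λ‖ = 1} ‖x - λ • y‖ ≥ δ`, there is a continuous linear functional `x*` of norm one with
`| ‖x* x‖ - ‖x* y‖ | ≥ δ / 3`. -/
theorem separating_functional {𝕜 E : Type*} [RCLike 𝕜] [NormedAddCommGroup E]
    [NormedSpace 𝕜 E] [CompleteSpace E] (δ : ℝ) (hδ0 : 0 < δ) (hδ2 : δ < 2)
    (x y : E) (hx : ‖x‖ = 1) (hy : ‖y‖ ≤ 1)
    (h : δ ≤ ⨅ l : {c : 𝕜 // ‖c‖ = 1}, ‖x - (l : 𝕜) • y‖) :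
    ∃ f : E →L[𝕜] 𝕜, ‖f‖ = 1 ∧ δ / 3 ≤ |‖f x‖ - ‖f y‖| := by
  have hx0 : x ≠ 0 := by
    intro h0; rw [h0, norm_zero] at hx; norm_num at hx
  obtain ⟨f, hf1, hfx⟩ := exists_dual_vector 𝕜 x (norm_ne_zero_iff.mpr hx0)
  have hfx' : ‖f x‖ = 1 := by rw [hfx, hx]; simp
  by_cases hcase : δ / 3 ≤ |‖f x‖ - ‖f y‖|
  · exact ⟨f, hf1, hcase⟩
  push_neg at hcase
  have hfy1 : ‖f y‖ ≤ 1 := by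
    calc ‖f y‖ ≤ ‖f‖ * ‖y‖ := f.le_opNorm y
    _ ≤ 1 := by rw [hf1]; linarith
  rw [hfx'] at hcase
  have hβ : 1 - δ / 3 < ‖f y‖ := by
    rcases abs_lt.mp hcase with ⟨h1, h2⟩; linarith
  have hβ0 : f y ≠ 0 := by
    intro h0; rw [h0, norm_zero] at hβ; linarith
  set lam : 𝕜 := (starRingEnd 𝕜) (f y) / (‖f y‖ : 𝕜) with hlamdef
  have hβn0 : (‖f y‖ : 𝕜) ≠ 0 := by
    simpa using norm_ne_zero_iff.mpr hβ0
  have hlam : ‖lam‖ = 1 := by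
    rw [hlamdef, norm_div, RCLike.norm_conj]
    simp [norm_ne_zero_iff.mpr hβ0]
  have hlamβ : lam * f y = (‖f y‖ : 𝕜) := by
    rw [hlamdef, div_mul_eq_mul_div, mul_comm, RCLike.mul_conj]
    rw [sq]
    field_simp
  have hz : δ ≤ ‖x - lam • y‖ := by
    refine le_trans h (ciInf_le (show BddBelow (Set.range fun l : {c : 𝕜 // ‖c‖ = 1} => ‖x - (l : 𝕜) • y‖) from ⟨0, ?_⟩) ⟨lam, hlam⟩)
    rintro r ⟨l, rfl⟩; positivity
  have hz0 : x - lam • y ≠ 0 := by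
    intro h0; rw [h0, norm_zero] at hz; linarith
  obtain ⟨g, hg1, hgz⟩ := exists_dual_vector 𝕜 (x - lam • y) (norm_ne_zero_iff.mpr hz0)
  have hgx1 : ‖g x‖ ≤ 1 := by
    calc ‖g x‖ ≤ ‖g‖ * ‖x‖ := g.le_opNorm x
    _ = 1 := by rw [hg1, hx, mul_one]
  set hm : E →L[𝕜] 𝕜 := g - g x • f with hmdef
  have hmx : hm x = 0 := by
    rw [hmdef]
    simp [hfx, hx, ContinuousLinearMap.smul_apply]
  have hmy : hm y = g y - g x * f y := by
    rw [hmdef]; simp [ContinuousLinearMap.smul_apply, smul_eq_mul]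
  have hsm : ‖g x • f‖ = ‖g x‖ * ‖f‖ := by exact norm_smul (g x) f
  have hmnorm : ‖hm‖ ≤ 1 + ‖g x‖ := by
    calc ‖hm‖ ≤ ‖g‖ + ‖g x • f‖ := norm_sub_le _ _
    _ = 1 + ‖g x‖ := by rw [hg1, hsm, hf1, mul_one]
  by_cases hcase2 : δ / 3 * ‖hm‖ < ‖hm y‖
  · have hmpos : 0 < ‖hm‖ := by
      rcases (norm_nonneg hm).lt_or_eq with hlt | heq
      · exact hlt
      · exfalso
        have h5 : ‖hm y‖ ≤ ‖hm‖ * ‖y‖ := hm.le_opNorm y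
        rw [← heq] at h5
        simp only [zero_mul] at h5
        rw [← heq] at hcase2
        have : ‖hm y‖ ≤ 0 := h5
        linarith [hcase2, this]
    have hnormsmul : ∀ z : E, ‖(((‖hm‖⁻¹ : ℝ) : 𝕜) • hm) z‖ = ‖hm‖⁻¹ * ‖hm z‖ := by
      intro z
      rw [ContinuousLinearMap.smul_apply]
      have : ‖((‖hm‖⁻¹ : ℝ) : 𝕜) • hm z‖ = ‖((‖hm‖⁻¹ : ℝ) : 𝕜)‖ * ‖hm z‖ := norm_smul _ _
      rw [this, RCLike.norm_ofReal, abs_of_pos (inv_pos.mpr hmpos)]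
    refine ⟨((‖hm‖⁻¹ : ℝ) : 𝕜) • hm, ?_, ?_⟩
    · have : ‖((‖hm‖⁻¹ : ℝ) : 𝕜) • hm‖ = ‖((‖hm‖⁻¹ : ℝ) : 𝕜)‖ * ‖hm‖ := by
        exact norm_smul ((‖hm‖⁻¹ : ℝ) : 𝕜) hm
      rw [this, RCLike.norm_ofReal, abs_of_pos (inv_pos.mpr hmpos),
        inv_mul_cancel₀ (ne_of_gt hmpos)]
    · rw [hnormsmul x, hnormsmul y, hmx, norm_zero, mul_zero, zero_sub, abs_neg,
        abs_of_nonneg (by positivity)]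
      calc δ / 3 = δ / 3 * ‖hm‖ * ‖hm‖⁻¹ := by field_simp
      _ ≤ ‖hm y‖ * ‖hm‖⁻¹ := mul_le_mul_of_nonneg_right hcase2.le (by positivity)
      _ = ‖hm‖⁻¹ * ‖hm y‖ := mul_comm _ _
  · exfalso
    push_neg at hcase2
    have key : g x - lam * g y = g x * (1 - lam * f y) - lam * (g y - g x * f y) := by
      ring
    have hzval : g (x - lam • y) = g x - lam * g y := by
      simp [smul_eq_mul]
    have h1 : δ ≤ ‖g x - lam * g y‖ := by
      rw [← hzval, hgz]
      simpa using hz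
    have h2 : ‖1 - lam * f y‖ = 1 - ‖f y‖ := by
      rw [hlamβ]
      have : (1 : 𝕜) - (‖f y‖ : 𝕜) = ((1 - ‖f y‖ : ℝ) : 𝕜) := by push_cast; ring
      rw [this, RCLike.norm_ofReal, abs_of_nonneg (by linarith)]
    have h3 : ‖g y - g x * f y‖ ≤ δ / 3 * (1 + ‖g x‖) := by
      rw [← hmy]
      calc ‖hm y‖ ≤ δ / 3 * ‖hm‖ := hcase2
      _ ≤ δ / 3 * (1 + ‖g x‖) := mul_le_mul_of_nonneg_left hmnorm (by positivity)
    have h4 : ‖g x - lam * g y‖ ≤ ‖g x‖ * (1 - ‖f y‖) + δ / 3 * (1 + ‖g x‖) := by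
      rw [key]
      calc ‖g x * (1 - lam * f y) - lam * (g y - g x * f y)‖
          ≤ ‖g x * (1 - lam * f y)‖ + ‖lam * (g y - g x * f y)‖ := norm_sub_le _ _
      _ = ‖g x‖ * (1 - ‖f y‖) + ‖g y - g x * f y‖ := by
            rw [norm_mul, norm_mul, h2, hlam, one_mul]
      _ ≤ ‖g x‖ * (1 - ‖f y‖) + δ / 3 * (1 + ‖g x‖) := by linarith
    have hgx0 : 0 ≤ ‖g x‖ := norm_nonneg _
    have hfy0 : 0 ≤ 1 - ‖f y‖ := by linarith
    have e1 : ‖g x‖ * (1 - ‖f y‖) ≤ 1 * (1 - ‖f y‖) :=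
      mul_le_mul_of_nonneg_right hgx1 hfy0
    have e2 : δ / 3 * (1 + ‖g x‖) ≤ δ / 3 * 2 :=
      mul_le_mul_of_nonneg_left (by linarith) (by positivity)
    linarith
end

section
/- Let E be a complex Banach space and let K = B_{E*} be the closed unit ball of its dual endowed with the weak* topology (a compact Hausdorff space). Then the canonical evaluation map j : E → C(K), defined by j(x)(x*) = x*(x), is a linear isometric embedding and j(E) does 12-SPR in C(K). -/
noncomputable section

/-- The pointwise modulus of a continuous function, as a real-valued continuous function. -/
def cmAbs {K : Type*} [TopologicalSpace K] {𝕜 : Type*} [RCLike 𝕜]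
    (f : C(K, 𝕜)) : C(K, ℝ) :=
  ⟨fun x => ‖f x‖, (map_continuous f).norm⟩

/-- `inf_{‖λ‖ = 1} ‖f - λ • g‖`. -/
def sprInf {K : Type*} [TopologicalSpace K] [CompactSpace K] {𝕜 : Type*} [RCLike 𝕜]
    (f g : C(K, 𝕜)) : ℝ :=
  ⨅ l : {c : 𝕜 // ‖c‖ = 1}, ‖f - (l : 𝕜) • g‖

/-- A subspace `E ⊆ C(K, 𝕜)` does `C`-stable phase retrieval. -/
def DoesCSPR {K : Type*} [TopologicalSpace K] [CompactSpace K] {𝕜 : Type*} [RCLike 𝕜]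
    (E : Submodule 𝕜 C(K, 𝕜)) (C : ℝ) : Prop :=
  ∀ f ∈ E, ∀ g ∈ E, sprInf f g ≤ C * ‖cmAbs f - cmAbs g‖

/-- The closed unit ball of the dual of `E`, as a subset of the dual endowed with the
weak* topology. -/
def dualBallSet (E : Type*) [NormedAddCommGroup E] [NormedSpace ℂ E] :
    Set (WeakDual ℂ E) :=
  {φ : WeakDual ℂ E | ‖WeakDual.toStrongDual φ‖ ≤ 1}

/-- Banach–Alaoglu: the closed unit ball of the dual is weak* compact. -/
instance (E : Type*) [NormedAddCommGroup E] [NormedSpace ℂ E] :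
    CompactSpace (dualBallSet E) := by
  apply isCompact_iff_compactSpace.mp
  have h := WeakDual.isCompact_closedBall (𝕜 := ℂ) (E := E) 0 1
  convert h using 1
  ext φ
  simp [dualBallSet, Metric.mem_closedBall, dist_zero_right]

section Aux

variable {E : Type*} [NormedAddCommGroup E] [NormedSpace ℂ E] [CompleteSpace E]

lemma norm_sub_norm_le_of_dual (x y : E) (a : ℝ)
    (h : ∀ χ : E →L[ℂ] ℂ, ‖χ‖ ≤ 1 → |‖χ x‖ - ‖χ y‖| ≤ a) :
    ‖x‖ - ‖y‖ ≤ a := by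
  by_cases hx : x = 0
  · have h0 : (0:ℝ) ≤ a := le_trans (abs_nonneg _) (h 0 (by simp))
    simp only [hx, norm_zero]
    linarith [norm_nonneg y]
  · obtain ⟨g, hg1, hgx⟩ := exists_dual_vector ℂ x (norm_ne_zero_iff.mpr hx)
    have h1 := abs_le.mp (h g hg1.le)
    have hx' : ‖g x‖ = ‖x‖ := by rw [hgx]; simp
    have h2 : ‖g y‖ ≤ ‖y‖ := by
      calc ‖g y‖ ≤ ‖g‖ * ‖y‖ := g.le_opNorm y
        _ = ‖y‖ := by rw [hg1, one_mul]
    linarith [h1.2]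

lemma key_spr (x y : E) (a : ℝ)
    (h : ∀ χ : E →L[ℂ] ℂ, ‖χ‖ ≤ 1 → |‖χ x‖ - ‖χ y‖| ≤ a)
    {ε : ℝ} (hε : 0 < ε) :
    ∃ l : ℂ, ‖l‖ = 1 ∧ ‖x - l • y‖ ≤ 3 * a + 2 * ε := by
  have h0 : (0:ℝ) ≤ a := le_trans (abs_nonneg _) (h 0 (by simp))
  have hxy : |‖x‖ - ‖y‖| ≤ a := by
    rw [abs_sub_le_iff]
    exact ⟨norm_sub_norm_le_of_dual x y a h,
      norm_sub_norm_le_of_dual y x a fun χ hχ => abs_sub_comm ‖χ x‖ ‖χ y‖ ▸ h χ hχ⟩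
  -- find μ with ‖x - μ • y‖ ≤ a + ε
  obtain ⟨μ, hμ⟩ : ∃ μ : ℂ, ‖x - μ • y‖ ≤ a + ε := by
    set S := Submodule.span ℂ ({y} : Set E) with hS
    by_cases hxS : x ∈ S
    · obtain ⟨μ, hμ⟩ := Submodule.mem_span_singleton.mp hxS
      refine ⟨μ, ?_⟩
      rw [hμ, sub_self, norm_zero]
      linarith
    · haveI : FiniteDimensional ℂ S :=
        FiniteDimensional.span_of_finite ℂ (Set.finite_singleton y)
      haveI hSc : IsClosed (S : Set E) := S.closed_of_finiteDimensional
      have hmkne : (Submodule.Quotient.mk x : E ⧸ S) ≠ 0 := by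
        simpa [Submodule.Quotient.mk_eq_zero] using hxS
      obtain ⟨g, hg1, hgx⟩ := exists_dual_vector ℂ (Submodule.Quotient.mk x : E ⧸ S) (norm_ne_zero_iff.mpr hmkne)
      set mkC : E →L[ℂ] (E ⧸ S) := ⟨S.mkQ, continuous_quot_mk⟩ with hmkC
      set χ : E →L[ℂ] ℂ := g.comp mkC with hχdef
      have hχle : ‖χ‖ ≤ 1 := by
        apply ContinuousLinearMap.opNorm_le_bound _ zero_le_one
        intro z
        calc ‖χ z‖ = ‖g (Submodule.Quotient.mk z)‖ := rfl
          _ ≤ ‖g‖ * ‖(Submodule.Quotient.mk z : E ⧸ S)‖ := g.le_opNorm _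
          _ ≤ 1 * ‖z‖ := by
              rw [hg1, one_mul, one_mul]
              exact Submodule.Quotient.norm_mk_le S z
      have hχy : χ y = 0 := by
        have hy0 : (Submodule.Quotient.mk y : E ⧸ S) = 0 :=
          (Submodule.Quotient.mk_eq_zero S).mpr (Submodule.mem_span_singleton_self y)
        show g (Submodule.Quotient.mk y) = 0
        rw [hy0, map_zero]
      have hq : ‖(Submodule.Quotient.mk x : E ⧸ S)‖ ≤ a := by
        have h1 := abs_le.mp (h χ hχle)
        have hx' : ‖χ x‖ = ‖(Submodule.Quotient.mk x : E ⧸ S)‖ := by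
          show ‖g (Submodule.Quotient.mk x)‖ = _
          rw [hgx]; simp
        rw [hχy, norm_zero, sub_zero, hx'] at h1
        exact h1.2
      obtain ⟨m, hm, hmlt⟩ := Submodule.Quotient.norm_mk_lt
        (Submodule.Quotient.mk x : E ⧸ S) hε
      have hmx : m - x ∈ S := (Submodule.Quotient.eq S).mp hm
      have hxm : x - m ∈ S := by
        have := S.neg_mem hmx
        rwa [neg_sub] at this
      obtain ⟨μ, hμ'⟩ := Submodule.mem_span_singleton.mp hxm
      refine ⟨μ, ?_⟩
      rw [hμ', sub_sub_cancel]
      linarith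
  -- choose the phase
  set l : ℂ := if μ = 0 then 1 else (‖μ‖⁻¹ : ℝ) • μ with hl
  have hl1 : ‖l‖ = 1 := by
    rw [hl]
    split_ifs with hμ0
    · simp
    · rw [norm_smul, Real.norm_eq_abs, abs_inv, abs_norm,
        inv_mul_cancel₀ (norm_ne_zero_iff.mpr hμ0)]
  refine ⟨l, hl1, ?_⟩
  have hdiff : ‖μ - l‖ = |‖μ‖ - 1| := by
    rw [hl]
    split_ifs with hμ0
    · simp [hμ0]
    · have hfac : μ - (‖μ‖⁻¹ : ℝ) • μ = (1 - ‖μ‖⁻¹ : ℝ) • μ := by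
        rw [sub_smul, one_smul]
      rw [hfac, norm_smul, Real.norm_eq_abs]
      have hne : ‖μ‖ ≠ 0 := norm_ne_zero_iff.mpr hμ0
      rw [show |1 - ‖μ‖⁻¹| * ‖μ‖ = |(1 - ‖μ‖⁻¹) * ‖μ‖| from by
          rw [abs_mul, abs_of_nonneg (norm_nonneg μ)],
        show (1 - ‖μ‖⁻¹) * ‖μ‖ = ‖μ‖ - 1 from by
          rw [sub_mul, one_mul, inv_mul_cancel₀ hne]]
  have hkey : ‖μ - l‖ * ‖y‖ ≤ 2 * a + ε := by
    have e1 : ‖μ - l‖ * ‖y‖ = |‖μ • y‖ - ‖y‖| := by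
      rw [hdiff, norm_smul,
        show ‖μ‖ * ‖y‖ - ‖y‖ = (‖μ‖ - 1) * ‖y‖ from by ring, abs_mul,
        abs_of_nonneg (norm_nonneg y)]
    have e2 : |‖μ • y‖ - ‖x‖| ≤ ‖x - μ • y‖ := by
      rw [abs_sub_comm]
      exact (abs_norm_sub_norm_le x (μ • y))
    calc ‖μ - l‖ * ‖y‖ = |‖μ • y‖ - ‖y‖| := e1
      _ ≤ |‖μ • y‖ - ‖x‖| + |‖x‖ - ‖y‖| := abs_sub_le _ _ _
      _ ≤ ‖x - μ • y‖ + a := add_le_add e2 hxy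
      _ ≤ (a + ε) + a := by linarith
      _ = 2 * a + ε := by ring
  calc ‖x - l • y‖ ≤ ‖x - μ • y‖ + ‖μ • y - l • y‖ := by
        rw [← sub_add_sub_cancel x (μ • y) (l • y)]
        exact norm_add_le _ _
    _ ≤ (a + ε) + ‖μ - l‖ * ‖y‖ := by
        rw [← sub_smul, norm_smul]
        exact add_le_add hμ (le_refl _)
    _ ≤ (a + ε) + (2 * a + ε) := by linarith
    _ = 3 * a + 2 * ε := by ring

end Aux

/-- For a complex Banach space `E`, the canonical evaluation map
`j : E → C(B_{E*})` (with `B_{E*}` the weak*-compact closed unit ball of the dual) is a linear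
isometric embedding whose range does `12`-SPR. -/
theorem canonical_embedding_12SPR (E : Type*) [NormedAddCommGroup E] [NormedSpace ℂ E]
    [CompleteSpace E] :
    ∃ j : E →ₗᵢ[ℂ] C(dualBallSet E, ℂ),
      (∀ (x : E) (φ : dualBallSet E), j x φ = (φ.1 : WeakDual ℂ E) x) ∧
      DoesCSPR (LinearMap.range j.toLinearMap) 12 := by
  classical
  -- the linear map
  set jL : E →ₗ[ℂ] C(dualBallSet E, ℂ) :=
    { toFun := fun x => ⟨fun φ => (φ.1 : WeakDual ℂ E) x,
        (WeakDual.eval_continuous x).comp continuous_subtype_val⟩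
      map_add' := fun x y => by ext φ; simp [map_add]
      map_smul' := fun c x => by ext φ; simp [map_smul] } with hjL
  have hjapp : ∀ (x : E) (φ : dualBallSet E), jL x φ = (φ.1 : WeakDual ℂ E) x := fun _ _ => rfl
  have hle : ∀ (x : E) (φ : dualBallSet E), ‖jL x φ‖ ≤ ‖x‖ := by
    intro x φ
    have h1 : ‖(WeakDual.toStrongDual φ.1) x‖ ≤ ‖WeakDual.toStrongDual φ.1‖ * ‖x‖ :=
      (WeakDual.toStrongDual φ.1).le_opNorm x
    have h2 : ‖WeakDual.toStrongDual φ.1‖ ≤ 1 := φ.2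
    calc ‖jL x φ‖ = ‖(WeakDual.toStrongDual φ.1) x‖ := rfl
      _ ≤ ‖WeakDual.toStrongDual φ.1‖ * ‖x‖ := h1
      _ ≤ 1 * ‖x‖ := mul_le_mul_of_nonneg_right h2 (norm_nonneg x)
      _ = ‖x‖ := one_mul _
  have hnorm : ∀ x : E, ‖jL x‖ = ‖x‖ := by
    intro x
    refine le_antisymm ((ContinuousMap.norm_le _ (norm_nonneg x)).mpr (hle x)) ?_
    by_cases hx : x = 0
    · simp [hx]
    · obtain ⟨g, hg1, hgx⟩ := exists_dual_vector ℂ x (norm_ne_zero_iff.mpr hx)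
      set φ : dualBallSet E := ⟨WeakDual.toStrongDual.symm g, by
        show ‖WeakDual.toStrongDual (WeakDual.toStrongDual.symm g)‖ ≤ 1
        rw [LinearEquiv.apply_symm_apply, hg1]⟩ with hφ
      have happ : jL x φ = g x := rfl
      have : ‖jL x φ‖ = ‖x‖ := by
        rw [happ, hgx]
        simp
      calc ‖x‖ = ‖jL x φ‖ := this.symm
        _ ≤ ‖jL x‖ := ContinuousMap.norm_coe_le_norm (jL x) φ
  set j : E →ₗᵢ[ℂ] C(dualBallSet E, ℂ) := ⟨jL, hnorm⟩ with hj
  refine ⟨j, hjapp, ?_⟩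
  intro f hf g hg
  obtain ⟨x, rfl⟩ := LinearMap.mem_range.mp hf
  obtain ⟨y, rfl⟩ := LinearMap.mem_range.mp hg
  set a : ℝ := ‖cmAbs (j.toLinearMap x) - cmAbs (j.toLinearMap y)‖ with ha
  have ha0 : (0:ℝ) ≤ a := norm_nonneg _
  have hpt : ∀ χ : E →L[ℂ] ℂ, ‖χ‖ ≤ 1 → |‖χ x‖ - ‖χ y‖| ≤ a := by
    intro χ hχ
    set φ : dualBallSet E := ⟨WeakDual.toStrongDual.symm χ, by
      show ‖WeakDual.toStrongDual (WeakDual.toStrongDual.symm χ)‖ ≤ 1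
      rwa [LinearEquiv.apply_symm_apply]⟩ with hφ
    have hb := ContinuousMap.norm_coe_le_norm
      (cmAbs (j.toLinearMap x) - cmAbs (j.toLinearMap y)) φ
    have happ : (cmAbs (j.toLinearMap x) - cmAbs (j.toLinearMap y)) φ = ‖χ x‖ - ‖χ y‖ := rfl
    rw [happ] at hb
    rwa [Real.norm_eq_abs] at hb
  -- conclude
  refine le_of_forall_pos_le_add ?_
  intro ε hε
  obtain ⟨l, hl1, hlle⟩ := key_spr x y a hpt (half_pos hε)
  have hbdd : BddBelow (Set.range fun l : {c : ℂ // ‖c‖ = 1} =>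
      ‖j.toLinearMap x - (l : ℂ) • j.toLinearMap y‖) := by
    refine ⟨0, ?_⟩
    rintro r ⟨l', rfl⟩
    exact norm_nonneg _
  have hile := ciInf_le hbdd (⟨l, hl1⟩ : {c : ℂ // ‖c‖ = 1})
  have hjsub : j.toLinearMap x - l • j.toLinearMap y = j.toLinearMap (x - l • y) := by
    rw [map_sub, map_smul]
  have hnrm : ‖j.toLinearMap x - l • j.toLinearMap y‖ = ‖x - l • y‖ := by
    rw [hjsub]
    exact hnorm _
  calc sprInf (j.toLinearMap x) (j.toLinearMap y)
      ≤ ‖j.toLinearMap x - l • j.toLinearMap y‖ := hile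
    _ = ‖x - l • y‖ := hnrm
    _ ≤ 3 * a + 2 * (ε / 2) := hlle
    _ ≤ 12 * a + ε := by linarith

end
end

section
/- Let K, L be compact Hausdorff spaces, with complex scalars, and let T : C(L) → C(K) be a linear operator with ‖T‖ ≤ 1 such that for every pair (s, t) ∈ L × L there exist points r_{s,t}, r̃_{s,t} ∈ K with Tf(r_{s,t}) = (1/2)(f(s) + f(t)) and Tf(r̃_{s,t}) = (1/2)(f(s) + i·f(t)) for every f ∈ C(L). Then T is a linear isometric embedding and T(C(L)) does SPR in C(K). -/
noncomputable section

/-- A subspace `E ⊆ C(K, 𝕜)` does stable phase retrieval. -/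
def DoesSPR {K : Type*} [TopologicalSpace K] [CompactSpace K] {𝕜 : Type*} [RCLike 𝕜]
    (E : Submodule 𝕜 C(K, 𝕜)) : Prop :=
  ∃ C : ℝ, 1 ≤ C ∧ DoesCSPR E C

open ComplexConjugate

private lemma nsq (z : ℂ) : Complex.normSq z = ‖z‖^2 := Complex.normSq_eq_norm_sq z

private lemma sq_diff_le (x y e m : ℝ) (hx0 : 0 ≤ x) (hy0 : 0 ≤ y) (hx : x ≤ m)
    (hy : y ≤ m) (h : |x - y| ≤ e) : |x^2 - y^2| ≤ e * (2*m) := by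
  have hxy : x^2 - y^2 = (x-y)*(x+y) := by ring
  rw [hxy, abs_mul]
  have h2 : |x+y| ≤ 2*m := by rw [abs_of_nonneg (by linarith)]; linarith
  have he : 0 ≤ e := le_trans (abs_nonneg _) h
  exact mul_le_mul h h2 (abs_nonneg _) he

private lemma key_est (a b c d : ℂ) (M δ : ℝ) (ha : ‖a‖ ≤ M) (hb : ‖b‖ ≤ M)
    (hc : ‖c‖ ≤ M) (hd : ‖d‖ ≤ M)
    (h1 : |‖a‖ - ‖c‖| ≤ δ) (h2 : |‖b‖ - ‖d‖| ≤ δ)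
    (h3 : |‖a + b‖ - ‖c + d‖| ≤ 2*δ)
    (h4 : |‖a + Complex.I*b‖ - ‖c + Complex.I*d‖| ≤ 2*δ) :
    ‖a * conj b - c * conj d‖ ≤ 12*M*δ := by
  have hδ : 0 ≤ δ := le_trans (abs_nonneg _) h1
  have e1 : ∀ x y : ℂ, ‖x + y‖^2 = ‖x‖^2 + ‖y‖^2 + 2*(x*conj y).re := by
    intro x y
    have := Complex.normSq_add x y
    simpa [nsq] using this
  have e2 : ∀ x y : ℂ, ‖x + Complex.I*y‖^2 = ‖x‖^2 + ‖y‖^2 + 2*(x*conj y).im := by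
    intro x y
    have h := Complex.normSq_add x (Complex.I*y)
    have h' : (x * conj (Complex.I * y)).re = (x * conj y).im := by
      simp [Complex.mul_re, Complex.mul_im]; ring
    rw [h'] at h
    have h'' : Complex.normSq (Complex.I * y) = Complex.normSq y := by simp
    rw [h''] at h
    simpa [nsq] using h
  have hA := sq_diff_le ‖a‖ ‖c‖ δ M (norm_nonneg a) (norm_nonneg c) ha hc h1
  have hB := sq_diff_le ‖b‖ ‖d‖ δ M (norm_nonneg b) (norm_nonneg d) hb hd h2
  have hS := sq_diff_le ‖a+b‖ ‖c+d‖ (2*δ) (2*M) (norm_nonneg _) (norm_nonneg _)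
    (le_trans (norm_add_le a b) (by linarith)) (le_trans (norm_add_le c d) (by linarith)) h3
  have hb' : ‖Complex.I * b‖ = ‖b‖ := by simp
  have hd' : ‖Complex.I * d‖ = ‖d‖ := by simp
  have hS' := sq_diff_le ‖a+Complex.I*b‖ ‖c+Complex.I*d‖ (2*δ) (2*M) (norm_nonneg _)
    (norm_nonneg _)
    (le_trans (norm_add_le a (Complex.I*b)) (by rw [hb']; linarith))
    (le_trans (norm_add_le c (Complex.I*d)) (by rw [hd']; linarith)) h4
  have hre : |(a * conj b).re - (c * conj d).re| ≤ 6*M*δ := by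
    have k1 := e1 a b; have k2 := e1 c d
    rw [abs_le] at hA hB hS ⊢
    constructor <;> linarith
  have him : |(a * conj b).im - (c * conj d).im| ≤ 6*M*δ := by
    have k1 := e2 a b; have k2 := e2 c d
    rw [abs_le] at hA hB hS' ⊢
    constructor <;> linarith
  calc ‖a * conj b - c * conj d‖
      ≤ |(a * conj b - c * conj d).re| + |(a * conj b - c * conj d).im| :=
        Complex.norm_le_abs_re_add_abs_im _
    _ = |(a * conj b).re - (c * conj d).re| + |(a * conj b).im - (c * conj d).im| := by
        simp [Complex.sub_re, Complex.sub_im]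
    _ ≤ 6*M*δ + 6*M*δ := add_le_add hre him
    _ = 12*M*δ := by ring

private lemma main_est {L : Type*} [TopologicalSpace L] [CompactSpace L]
    (f g : C(L, ℂ)) (δ : ℝ) (hδ : 0 ≤ δ) (hfg : ‖g‖ ≤ ‖f‖)
    (h1 : ∀ s, |‖f s‖ - ‖g s‖| ≤ δ)
    (h2 : ∀ s t, |‖f s + f t‖ - ‖g s + g t‖| ≤ 2*δ)
    (h3 : ∀ s t, |‖f s + Complex.I * f t‖ - ‖g s + Complex.I * g t‖| ≤ 2*δ) :
    ∃ l : ℂ, ‖l‖ = 1 ∧ ‖f - l • g‖ ≤ 26*δ := by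
  set M := ‖f‖ with hMdef
  by_cases hcase : M ≤ 13*δ
  · refine ⟨1, by simp, ?_⟩
    calc ‖f - (1:ℂ) • g‖ = ‖f - g‖ := by rw [one_smul]
      _ ≤ ‖f‖ + ‖g‖ := norm_sub_le _ _
      _ ≤ 26*δ := by linarith
  · push_neg at hcase
    have hM0 : 0 < M := lt_of_le_of_lt (by linarith) hcase
    have hδM : δ < M := lt_of_le_of_lt (by linarith) hcase
    have hfne : f ≠ 0 := by intro h0; rw [h0, norm_zero] at hMdef; rw [hMdef] at hM0; linarith
    obtain ⟨s, hs⟩ : ∃ s, f s ≠ 0 := by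
      by_contra hc; push_neg at hc
      exact hfne (ContinuousMap.ext fun s => hc s)
    have : Nonempty L := ⟨s⟩
    obtain ⟨s₀, hs₀⟩ := ((map_continuous f).norm).exists_forall_ge' s
      (by simp [Filter.cocompact_eq_bot])
    have hMeq : ‖f s₀‖ = M :=
      le_antisymm (f.norm_coe_le_norm s₀)
        ((ContinuousMap.norm_le f (norm_nonneg _)).mpr fun t => hs₀ t)
    set v := g s₀ with hvdef
    have hv1 : M - δ ≤ ‖v‖ := by have := abs_le.mp (h1 s₀); rw [hMeq] at this; linarith [this.1]
    have hv0 : 0 < ‖v‖ := by linarith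
    have hvM : ‖v‖ ≤ M := le_trans (g.norm_coe_le_norm s₀) hfg
    have hM0' : ((M:ℝ):ℂ) ≠ 0 := by exact_mod_cast ne_of_gt hM0
    have hv0' : ((‖v‖:ℝ):ℂ) ≠ 0 := by exact_mod_cast ne_of_gt hv0
    set l : ℂ := (f s₀ * conj v) / ((M:ℂ) * (‖v‖:ℂ)) with hldef
    have hMc : ‖((M:ℝ):ℂ)‖ = M := by
      rw [Complex.norm_real, Real.norm_eq_abs, abs_of_pos hM0]
    have hvc : ‖((‖v‖:ℝ):ℂ)‖ = ‖v‖ := by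
      rw [Complex.norm_real, Real.norm_eq_abs, abs_of_pos hv0]
    have hlnorm : ‖l‖ = 1 := by
      rw [hldef, norm_div, norm_mul, norm_mul, RCLike.norm_conj, hMeq, hMc, hvc]
      exact div_self (by positivity)
    refine ⟨l, hlnorm, ?_⟩
    have hu2 : conj (f s₀) * f s₀ = ((M:ℝ):ℂ)^2 := by
      rw [mul_comm, Complex.mul_conj, nsq, hMeq]; push_cast; ring
    set w : ℂ := conj (f s₀) / (M:ℂ) with hwdef
    have hwnorm : ‖w‖ = 1 := by
      rw [hwdef, norm_div, RCLike.norm_conj, hMeq, hMc]; field_simp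
    have hpt : ∀ t, ‖f t - l * g t‖ ≤ 13*δ := by
      intro t
      have hkey := key_est (f t) (f s₀) (g t) (g s₀) M δ
        (f.norm_coe_le_norm t) (le_of_eq hMeq)
        (le_trans (g.norm_coe_le_norm t) hfg) (le_trans (g.norm_coe_le_norm s₀) hfg)
        (h1 t) (h1 s₀) (h2 t s₀) (h3 t s₀)
      set X := f t * conj (f s₀) with hXdef
      set Y := g t * conj v with hYdef
      have hwl : w * l = conj v / ((‖v‖:ℝ):ℂ) := by
        rw [hwdef, hldef, div_mul_div_comm, ← mul_assoc, hu2,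
          div_eq_div_iff (mul_ne_zero hM0' (mul_ne_zero hM0' hv0')) hv0']
        ring
      have hrw : w * (f t - l * g t) = X/(M:ℂ) - Y/((‖v‖:ℝ):ℂ) := by
        have expand : w * (f t - l * g t) = w * f t - (w * l) * g t := by ring
        rw [expand, hwl, hwdef, hXdef, hYdef]
        ring
      have hnorm_eq : ‖f t - l * g t‖ = ‖X/(M:ℂ) - Y/((‖v‖:ℝ):ℂ)‖ := by
        rw [← hrw, norm_mul, hwnorm, one_mul]
      rw [hnorm_eq]
      have t1 : ‖X/(M:ℂ) - Y/(M:ℂ)‖ ≤ 12*δ := by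
        rw [div_sub_div_same, norm_div, hMc, div_le_iff₀ hM0]
        calc ‖X - Y‖ ≤ 12*M*δ := hkey
          _ = 12*δ*M := by ring
      have t2 : ‖Y/(M:ℂ) - Y/((‖v‖:ℝ):ℂ)‖ ≤ δ := by
        have hYle : ‖Y‖ ≤ M * ‖v‖ := by
          rw [hYdef, norm_mul, RCLike.norm_conj]
          exact mul_le_mul (le_trans (g.norm_coe_le_norm t) hfg) le_rfl (norm_nonneg _)
            (le_of_lt hM0)
        have hfactor : Y/(M:ℂ) - Y/((‖v‖:ℝ):ℂ) = Y * (((1/M - 1/‖v‖ : ℝ)):ℂ) := by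
          push_cast; ring
        rw [hfactor, norm_mul, Complex.norm_real, Real.norm_eq_abs]
        have habs : |(1/M - 1/‖v‖ : ℝ)| = 1/‖v‖ - 1/M := by
          rw [abs_of_nonpos (by rw [sub_nonpos]; exact one_div_le_one_div_of_le hv0 hvM)]
          ring
        rw [habs]
        have step : ‖Y‖ * (1/‖v‖ - 1/M) ≤ (M*‖v‖) * (1/‖v‖ - 1/M) :=
          mul_le_mul_of_nonneg_right hYle
            (by rw [sub_nonneg]; exact one_div_le_one_div_of_le hv0 hvM)
        have e1 : ‖v‖ * (1/‖v‖) = 1 := by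
          rw [mul_one_div, div_self (ne_of_gt hv0)]
        have e2 : M * (1/M) = 1 := by
          rw [mul_one_div, div_self (ne_of_gt hM0)]
        have eqn : (M*‖v‖) * (1/‖v‖ - 1/M) = M - ‖v‖ := by
          calc (M*‖v‖) * (1/‖v‖ - 1/M)
              = M * (‖v‖*(1/‖v‖)) - ‖v‖ * (M*(1/M)) := by ring
            _ = M - ‖v‖ := by rw [e1, e2]; ring
        linarith
      calc ‖X/(M:ℂ) - Y/((‖v‖:ℝ):ℂ)‖
          ≤ ‖X/(M:ℂ) - Y/(M:ℂ)‖ + ‖Y/(M:ℂ) - Y/((‖v‖:ℝ):ℂ)‖ := by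
            have := norm_sub_le_norm_sub_add_norm_sub (X/(M:ℂ)) (Y/(M:ℂ)) (Y/((‖v‖:ℝ):ℂ))
            linarith [norm_sub_le (X/(M:ℂ) - Y/(M:ℂ)) (Y/((‖v‖:ℝ):ℂ) - Y/(M:ℂ))]
        _ ≤ 12*δ + δ := add_le_add t1 t2
        _ = 13*δ := by ring
    have : ‖f - l • g‖ ≤ 13*δ := by
      refine (ContinuousMap.norm_le _ (by positivity)).mpr fun t => ?_
      have : (f - l • g) t = f t - l * g t := by
        simp [ContinuousMap.sub_apply, ContinuousMap.smul_apply, smul_eq_mul]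
      rw [this]; exact hpt t
    linarith

/-- Let `K, L` be compact Hausdorff spaces (complex scalars) and
`T : C(L) → C(K)` a contraction such that for every `(s, t) ∈ L × L` there are points
`r, r' ∈ K` with `Tf r = (f s + f t) / 2` and `Tf r' = (f s + i f t) / 2` for all `f`.
Then `T` is an isometric embedding and its range does SPR. -/
theorem overlap_implies_complex_SPR {K L : Type*}
    [TopologicalSpace K] [CompactSpace K] [T2Space K]
    [TopologicalSpace L] [CompactSpace L] [T2Space L]
    (T : C(L, ℂ) →L[ℂ] C(K, ℂ)) (hT : ‖T‖ ≤ 1)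
    (hover : ∀ s t : L, ∃ r r' : K,
      (∀ f : C(L, ℂ), T f r = (f s + f t) / 2) ∧
      (∀ f : C(L, ℂ), T f r' = (f s + Complex.I * f t) / 2)) :
    (∀ f : C(L, ℂ), ‖T f‖ = ‖f‖) ∧
    DoesSPR (LinearMap.range (T : C(L, ℂ) →ₗ[ℂ] C(K, ℂ))) := by
  have hiso : ∀ f : C(L, ℂ), ‖T f‖ = ‖f‖ := by
    intro f
    refine le_antisymm ?_ ?_
    · calc ‖T f‖ ≤ ‖T‖ * ‖f‖ := T.le_opNorm f
        _ ≤ 1 * ‖f‖ := mul_le_mul_of_nonneg_right hT (norm_nonneg f)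
        _ = ‖f‖ := one_mul _
    · refine (ContinuousMap.norm_le f (norm_nonneg _)).mpr fun s => ?_
      obtain ⟨r, r', hr, -⟩ := hover s s
      have hval : (T f) r = f s := by rw [hr f]; ring
      calc ‖f s‖ = ‖(T f) r‖ := by rw [hval]
        _ ≤ ‖T f‖ := (T f).norm_coe_le_norm r
  refine ⟨hiso, 26, by norm_num, ?_⟩
  intro f' hf' g' hg'
  obtain ⟨f, rfl⟩ := LinearMap.mem_range.mp hf'
  obtain ⟨g, rfl⟩ := LinearMap.mem_range.mp hg'
  show sprInf (T f) (T g) ≤ 26 * ‖cmAbs (T f) - cmAbs (T g)‖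
  set δ := ‖cmAbs (T f) - cmAbs (T g)‖ with hδdef
  have hδ0 : 0 ≤ δ := norm_nonneg _
  have hpt : ∀ x : K, |‖T f x‖ - ‖T g x‖| ≤ δ := by
    intro x
    have h := (cmAbs (T f) - cmAbs (T g)).norm_coe_le_norm x
    have h2 : (cmAbs (T f) - cmAbs (T g)) x = ‖T f x‖ - ‖T g x‖ := rfl
    rw [h2, Real.norm_eq_abs] at h
    exact h
  have h1 : ∀ s : L, |‖f s‖ - ‖g s‖| ≤ δ := by
    intro s
    obtain ⟨r, r', hr, -⟩ := hover s s
    have hf : (T f) r = f s := by rw [hr f]; ring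
    have hg : (T g) r = g s := by rw [hr g]; ring
    have := hpt r
    rwa [hf, hg] at this
  have h2 : ∀ s t : L, |‖f s + f t‖ - ‖g s + g t‖| ≤ 2*δ := by
    intro s t
    obtain ⟨r, r', hr, -⟩ := hover s t
    have hf : f s + f t = 2 * (T f) r := by rw [hr f]; ring
    have hg : g s + g t = 2 * (T g) r := by rw [hr g]; ring
    rw [hf, hg, norm_mul, norm_mul]
    have h2n : ‖(2:ℂ)‖ = 2 := by norm_num
    rw [h2n, ← mul_sub, abs_mul, abs_of_nonneg (by norm_num : (0:ℝ) ≤ 2)]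
    exact mul_le_mul_of_nonneg_left (hpt r) (by norm_num)
  have h3 : ∀ s t : L, |‖f s + Complex.I * f t‖ - ‖g s + Complex.I * g t‖| ≤ 2*δ := by
    intro s t
    obtain ⟨r, r', -, hr'⟩ := hover s t
    have hf : f s + Complex.I * f t = 2 * (T f) r' := by rw [hr' f]; ring
    have hg : g s + Complex.I * g t = 2 * (T g) r' := by rw [hr' g]; ring
    rw [hf, hg, norm_mul, norm_mul]
    have h2n : ‖(2:ℂ)‖ = 2 := by norm_num
    rw [h2n, ← mul_sub, abs_mul, abs_of_nonneg (by norm_num : (0:ℝ) ≤ 2)]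
    exact mul_le_mul_of_nonneg_left (hpt r') (by norm_num)
  have hbdd : BddBelow (Set.range fun l : {c : ℂ // ‖c‖ = 1} => ‖T f - (l : ℂ) • T g‖) := by
    refine ⟨0, ?_⟩
    rintro x ⟨i, rfl⟩
    exact norm_nonneg _
  have key : ∀ l : ℂ, ‖l‖ = 1 → ‖f - l • g‖ ≤ 26*δ → sprInf (T f) (T g) ≤ 26*δ := by
    intro l hl hb
    have step : sprInf (T f) (T g) ≤ ‖T f - l • T g‖ := ciInf_le hbdd ⟨l, hl⟩
    have heq : T f - l • T g = T (f - l • g) := by rw [map_sub, map_smul]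
    rw [heq, hiso] at step
    linarith
  by_cases hc : ‖g‖ ≤ ‖f‖
  · obtain ⟨l, hl, hb⟩ := main_est f g δ hδ0 hc h1 h2 h3
    exact key l hl hb
  · push_neg at hc
    obtain ⟨l, hl, hb⟩ := main_est g f δ hδ0 (le_of_lt hc)
      (fun s => by rw [abs_sub_comm]; exact h1 s)
      (fun s t => by rw [abs_sub_comm]; exact h2 s t)
      (fun s t => by rw [abs_sub_comm]; exact h3 s t)
    have hl' : ‖(starRingEnd ℂ) l‖ = 1 := by rw [RCLike.norm_conj]; exact hl
    refine key ((starRingEnd ℂ) l) hl' ?_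
    have hconj : (starRingEnd ℂ) l * l = 1 := by
      rw [mul_comm, Complex.mul_conj, nsq, hl]; norm_num
    have heq : f - (starRingEnd ℂ) l • g = (starRingEnd ℂ) l • (l • f - g) := by
      rw [smul_sub, smul_smul, hconj, one_smul]
    rw [heq, norm_smul, hl', one_mul]
    calc ‖l • f - g‖ = ‖g - l • f‖ := norm_sub_rev _ _
      _ ≤ 26*δ := hb

end
end

section
/- Over the complex field, there exists a linear isometric embedding of c₀ into C₀[1, ω²) whose range does SPR, where C₀[1, ω²) = {f ∈ C([1, ω²]) : f(ω²) = 0}. -/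
open scoped ZeroAtInfty

noncomputable section

/-- Ordinal intervals `[a, b]` (with the order topology of the ordinals) are compact spaces. -/
instance ordIccCompact (a b : Ordinal.{0}) : CompactSpace (Set.Icc a b) :=
  isCompact_iff_compactSpace.mp isCompact_Icc

/-- The point `ω ^ 2` of the ordinal interval `[1, ω ^ 2]`. -/
def omegaSqTop : Set.Icc (1 : Ordinal.{0}) (Ordinal.omega0 ^ (2 : Ordinal.{0})) :=
  ⟨Ordinal.omega0 ^ (2 : Ordinal.{0}),
    ⟨Order.one_le_iff_pos.mpr (Ordinal.opow_pos _ Ordinal.omega0_pos), le_rfl⟩⟩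

namespace C0SPRaux
open Complex
open ComplexConjugate

local notation "ω" => Ordinal.omega0

lemma omega_sq : (ω ^ (2:Ordinal)) = ω * ω := by
  rw [show (2:Ordinal) = 1 + 1 from (one_add_one_eq_two).symm, Ordinal.opow_add, Ordinal.opow_one]

lemma aux_lt {m n k l : ℕ} (h : m < n ∨ (m = n ∧ k < l)) :
    ω * m + k < ω * n + l := by
  rcases h with h | ⟨rfl, h⟩
  · calc ω * (m:Ordinal) + k < ω * m + ω := add_lt_add_right (Ordinal.nat_lt_omega0 k) _
      _ = ω * ((m:Ordinal) + 1) := by rw [mul_add, mul_one]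
      _ ≤ ω * n := by
          apply mul_le_mul_right
          rw [show ((m:Ordinal) + 1) = ((m+1 : ℕ) : Ordinal) by push_cast; ring]
          exact Nat.cast_le.mpr h
      _ ≤ ω * n + l := le_self_add
  · exact add_lt_add_right (Nat.cast_lt.mpr h) _

lemma aux_le {m n k l : ℕ} (h : m < n ∨ (m = n ∧ k ≤ l)) :
    ω * m + k ≤ ω * n + l := by
  rcases h with h | ⟨rfl, h⟩
  · exact (aux_lt (Or.inl h)).le
  · exact add_le_add_right (Nat.cast_le.mpr h) _

lemma lt_iff {m n k l : ℕ} : ω * m + k < ω * n + l ↔ (m < n ∨ (m = n ∧ k < l)) := by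
  constructor
  · intro h
    by_contra hc
    have h' : n < m ∨ (n = m ∧ l ≤ k) := by omega
    exact absurd (aux_le h') (not_le.mpr h)
  · exact aux_lt

lemma le_iff {m n k l : ℕ} : ω * m + k ≤ ω * n + l ↔ (m < n ∨ (m = n ∧ k ≤ l)) := by
  constructor
  · intro h
    by_contra hc
    have h' : n < m ∨ (n = m ∧ l < k) := by omega
    exact absurd (aux_lt h') (not_lt.mpr h)
  · exact aux_le

lemma eq_iff {m n k l : ℕ} : ω * m + k = ω * n + l ↔ (m = n ∧ k = l) := by
  constructor
  · intro h
    have h1 := le_iff.mp h.le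
    have h2 := le_iff.mp h.ge
    omega
  · rintro ⟨rfl, rfl⟩; rfl

lemma lt_top (m k : ℕ) : ω * m + k < ω * ω := by
  calc ω * (m:Ordinal) + k < ω * m + ω := add_lt_add_right (Ordinal.nat_lt_omega0 k) _
    _ = ω * ((m:Ordinal) + 1) := by rw [mul_add, mul_one]
    _ ≤ ω * ω := by
        apply mul_le_mul_right
        rw [show ((m:Ordinal) + 1) = ((m+1 : ℕ) : Ordinal) by push_cast; ring]
        exact (Ordinal.nat_lt_omega0 (m+1)).le

lemma rep {β : Ordinal.{0}} (h : β < ω * ω) : ∃ m k : ℕ, β = ω * m + k := by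
  obtain ⟨m, hm⟩ := Ordinal.lt_omega0.mp ((Ordinal.div_lt Ordinal.omega0_ne_zero).mpr h)
  obtain ⟨k, hk⟩ := Ordinal.lt_omega0.mp (Ordinal.mod_lt β Ordinal.omega0_ne_zero)
  exact ⟨m, k, by rw [← Ordinal.div_add_mod β ω, hm, hk]⟩

/-- pointwise value pattern -/
def pv (x : ℕ → ℂ) (m k : ℕ) : ℂ :=
  if k = 0 then (if m = 0 then 0 else x (m-1) / 2)
  else if k = 1 then x m
  else if k % 2 = 0 then (x m + x (m + k/2)) / 2
  else (x m + Complex.I * x (m + k/2)) / 2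

open scoped Classical in
def val (x : ℕ → ℂ) (β : Ordinal.{0}) : ℂ :=
  if h : ∃ m k : ℕ, β = ω * m + k then pv x h.choose h.choose_spec.choose else 0

lemma val_eval (x : ℕ → ℂ) (m k : ℕ) : val x (ω * m + k) = pv x m k := by
  have h : ∃ m' k' : ℕ, (ω * m + k : Ordinal) = ω * m' + k' := ⟨m, k, rfl⟩
  rw [val, dif_pos h]
  obtain ⟨hm, hk⟩ := eq_iff.mp h.choose_spec.choose_spec
  rw [show pv x h.choose = pv x m from congrArg _ hm.symm, ← hk]

lemma val_top (x : ℕ → ℂ) : val x (ω * ω) = 0 := by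
  rw [val, dif_neg]
  rintro ⟨m, k, e⟩
  exact absurd e.symm (lt_top m k).ne

lemma pv_add (x y : ℕ → ℂ) (m k : ℕ) : pv (x + y) m k = pv x m k + pv y m k := by
  simp only [pv, Pi.add_apply]
  split_ifs <;> ring

lemma pv_smul (c : ℂ) (x : ℕ → ℂ) (m k : ℕ) : pv (c • x) m k = c * pv x m k := by
  simp only [pv, Pi.smul_apply, smul_eq_mul]
  split_ifs <;> ring

lemma val_add (x y : ℕ → ℂ) (β : Ordinal.{0}) : val (x + y) β = val x β + val y β := by
  rw [val, val, val]
  split_ifs with h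
  · exact pv_add x y _ _
  · simp

lemma val_smul (c : ℂ) (x : ℕ → ℂ) (β : Ordinal.{0}) : val (c • x) β = c * val x β := by
  rw [val, val]
  split_ifs with h
  · exact pv_smul c x _ _
  · simp

lemma pv_bound {x : ℕ → ℂ} {C : ℝ} (hC : ∀ n, ‖x n‖ ≤ C) (h0 : 0 ≤ C) (m k : ℕ) :
    ‖pv x m k‖ ≤ C := by
  have h2 : ‖(2:ℂ)‖ = 2 := by norm_num
  simp only [pv]
  split_ifs
  · simpa using h0
  · rw [norm_div, h2]
    linarith [hC (m-1), norm_nonneg (x (m-1))]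
  · exact hC m
  · rw [norm_div, h2]
    have := norm_add_le (x m) (x (m + k/2))
    have := hC m; have := hC (m + k/2)
    linarith
  · rw [norm_div, h2]
    have h3 := norm_add_le (x m) (Complex.I * x (m + k/2))
    have h4 : ‖Complex.I * x (m + k/2)‖ = ‖x (m + k/2)‖ := by
      rw [norm_mul, Complex.norm_I, one_mul]
    have := hC m; have := hC (m + k/2)
    linarith

lemma val_bound {x : ℕ → ℂ} {C : ℝ} (hC : ∀ n, ‖x n‖ ≤ C) (h0 : 0 ≤ C) (β : Ordinal.{0}) :
    ‖val x β‖ ≤ C := by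
  rw [val]; split_ifs with h
  · exact pv_bound hC h0 _ _
  · simpa using h0

lemma pv_tail {x : ℕ → ℂ} {N : ℕ} {c : ℝ} (hN : ∀ n, N ≤ n → ‖x n‖ ≤ c) (hc : 0 ≤ c)
    {m k : ℕ} (hm : N ≤ m) (h : N < m + k) : ‖pv x m k‖ ≤ c := by
  have h2 : ‖(2:ℂ)‖ = 2 := by norm_num
  simp only [pv]
  split_ifs with e0 e1 e2
  · omega
  · rw [norm_div, h2]
    have := hN (m-1) (by omega)
    linarith [norm_nonneg (x (m-1))]
  · exact hN m hm
  · rw [norm_div, h2]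
    have := norm_add_le (x m) (x (m + k/2))
    have := hN m hm; have := hN (m + k/2) (by omega)
    linarith
  · rw [norm_div, h2]
    have h3 := norm_add_le (x m) (Complex.I * x (m + k/2))
    have h4 : ‖Complex.I * x (m + k/2)‖ = ‖x (m + k/2)‖ := by
      rw [norm_mul, Complex.norm_I, one_mul]
    have := hN m hm; have := hN (m + k/2) (by omega)
    linarith

lemma pv_near (x : ℕ → ℂ) (m b : ℕ) (hb : 2 ≤ b) :
    ∃ c : ℂ, ‖c‖ = 1 ∧ pv x m b = (x m + c * x (m + b/2)) / 2 := by
  rcases Nat.even_or_odd b with he | ho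
  · exact ⟨1, norm_one, by simp only [pv]; rw [if_neg (by omega), if_neg (by omega),
      if_pos (Nat.even_iff.mp he)]; ring⟩
  · refine ⟨Complex.I, Complex.norm_I, ?_⟩
    have hodd := Nat.odd_iff.mp ho
    simp only [pv]
    rw [if_neg (by omega), if_neg (by omega), if_neg (by omega)]

end C0SPRaux

namespace Part2
open C0SPRaux Complex
local notation "ω" => Ordinal.omega0

abbrev K2 := Set.Icc (1 : Ordinal.{0}) (Ordinal.omega0 ^ (2 : Ordinal.{0}))

lemma mem1 (m k : ℕ) (hk : 1 ≤ k) :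
    (ω * m + k : Ordinal.{0}) ∈ Set.Icc (1:Ordinal.{0}) (ω ^ (2:Ordinal)) := by
  constructor
  · calc (1:Ordinal) = ((1:ℕ):Ordinal) := by norm_num
      _ ≤ (k:Ordinal) := Nat.cast_le.mpr hk
      _ ≤ ω * m + k := le_add_self
  · rw [omega_sq]; exact (lt_top m k).le

def ptt (m k : ℕ) (hk : 1 ≤ k) : K2 := ⟨ω * m + k, mem1 m k hk⟩

lemma eventually_Ioc {p : K2} {γ : Ordinal.{0}} (hγ : γ < ↑p) {P : K2 → Prop}
    (h : ∀ q : K2, γ < ↑q → (q:Ordinal) ≤ ↑p → P q) : ∀ᶠ q in nhds p, P q := by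
  have hU : IsOpen ((fun q : K2 => (q : Ordinal)) ⁻¹' (Set.Ioi γ ∩ Set.Iio (↑p + 1))) :=
    continuous_subtype_val.isOpen_preimage _ (isOpen_Ioi.inter isOpen_Iio)
  refine Filter.eventually_of_mem (hU.mem_nhds ?_) ?_
  · refine Set.mem_preimage.mpr ⟨hγ, ?_⟩
    rw [Set.mem_Iio, Ordinal.add_one_eq_succ]
    exact Order.lt_succ_iff.mpr le_rfl
  · intro q hq
    refine h q hq.1 ?_
    have := hq.2
    rw [Set.mem_Iio, Ordinal.add_one_eq_succ] at this
    exact Order.le_of_lt_succ this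

lemma cont_val (x : ℕ → ℂ) (hx : Filter.Tendsto (fun n => ‖x n‖) Filter.atTop (nhds 0)) :
    Continuous (fun p : K2 => val x ↑p) := by
  have hxb : ∀ ε : ℝ, 0 < ε → ∃ N, ∀ n, N ≤ n → ‖x n‖ ≤ ε/2 := by
    intro ε hε
    obtain ⟨N, hN⟩ := Metric.tendsto_atTop.mp hx (ε/2) (by linarith)
    exact ⟨N, fun n hn => by
      have := hN n hn
      rw [Real.dist_eq, sub_zero, _root_.abs_of_nonneg (norm_nonneg _)] at this
      linarith⟩
  rw [continuous_iff_continuousAt]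
  intro p
  rcases lt_or_eq_of_le p.2.2 with hp | hp
  · -- ↑p < ω^2
    rw [omega_sq] at hp
    obtain ⟨m, k, hmk⟩ := rep hp
    rcases Nat.eq_zero_or_pos k with rfl | hk
    · -- p = ω*(m'+1), limit of block m'
      have hm0 : m ≠ 0 := by
        rintro rfl
        have h1 := p.2.1
        rw [hmk] at h1
        simp at h1
      obtain ⟨m', rfl⟩ := Nat.exists_eq_succ_of_ne_zero hm0
      have hval : val x ↑p = x m' / 2 := by
        rw [hmk, val_eval]
        simp [pv]
      rw [ContinuousAt, Metric.tendsto_nhds]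
      intro ε hε
      obtain ⟨J, hJ⟩ := hxb ε hε
      have hγ : (ω * (m' : ℕ) + ((2*J+2 : ℕ)) : Ordinal) < ↑p := by
        rw [hmk]
        exact aux_lt (Or.inl (by omega))
      refine eventually_Ioc hγ ?_
      intro q hq1 hq2
      by_cases hqp : (q:Ordinal) = ↑p
      · have hvq : val x ↑q = val x ↑p := by rw [hqp]
        simp only [hvq]
        simpa using hε
      · have hqlt : (q:Ordinal) < ω * ω := lt_of_le_of_lt (lt_of_le_of_ne hq2 hqp).le hp
        obtain ⟨a, b, hab⟩ := rep hqlt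
        rw [hab] at hq1 hq2
        rw [hmk] at hq2
        have h1 := lt_iff.mp hq1
        have h2 := le_iff.mp hq2
        have hcase : a = m' ∧ 2*J+2 < b := by
          rcases h2 with h2' | ⟨ha, hb0⟩
          · omega
          · exfalso
            apply hqp
            rw [hab, hmk, ha]
            have hb : b = 0 := by omega
            rw [hb]
        obtain ⟨rfl, hb⟩ := hcase
        obtain ⟨c, hc1, hc2⟩ := pv_near x a b (by omega)
        have hvq : val x ↑q = (x a + c * x (a + b/2))/2 := by rw [hab, val_eval, hc2]
        rw [hvq, hval, dist_eq_norm]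
        have he : (x a + c * x (a + b / 2)) / 2 - x a / 2 = c * x (a + b/2) / 2 := by ring
        have h2n : ‖(2:ℂ)‖ = 2 := by norm_num
        rw [he, norm_div, norm_mul, hc1, one_mul, h2n]
        have := hJ (a + b/2) (by omega)
        linarith
    · -- isolated point
      have hγ : (ω * (m:ℕ) + ((k-1:ℕ)) : Ordinal) < ↑p := by
        rw [hmk]
        exact aux_lt (Or.inr ⟨rfl, by omega⟩)
      have hev : ∀ᶠ q in nhds p, (fun q : K2 => val x ↑q) q = val x ↑p := by
        refine eventually_Ioc hγ ?_
        intro q hq1 hq2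
        obtain ⟨a, b, hab⟩ := rep (lt_of_le_of_lt hq2 hp)
        rw [hab] at hq1 hq2
        rw [hmk] at hq2 ⊢
        have h1 := lt_iff.mp hq1
        have h2 := le_iff.mp hq2
        have hcase : a = m ∧ b = k := by omega
        simp only [hab, hcase.1, hcase.2]
      exact Filter.EventuallyEq.continuousAt hev
  · -- p = ω^2
    rw [ContinuousAt, Metric.tendsto_nhds]
    intro ε hε
    obtain ⟨N, hN⟩ := hxb ε hε
    have hval : val x ↑p = 0 := by rw [hp, omega_sq, val_top]
    have hγ : (ω * (N:ℕ) + ((0:ℕ)) : Ordinal) < ↑p := by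
      rw [hp, omega_sq]
      exact lt_top N 0
    refine eventually_Ioc hγ ?_
    intro q hq1 hq2
    rw [hval]
    by_cases hq : (q:Ordinal) = ↑p
    · have hvq : val x ↑q = val x ↑p := by rw [hq]
      rw [hvq, hval]
      simpa using hε
    · have hqlt : (q:Ordinal) < ω * ω := by
        rw [← omega_sq, ← hp]
        exact lt_of_le_of_ne hq2 hq
      obtain ⟨a, b, hab⟩ := rep hqlt
      rw [hab] at hq1
      have h1 := lt_iff.mp hq1
      rw [hab, val_eval, dist_eq_norm, sub_zero]
      have hbd : ‖pv x a b‖ ≤ ε/2 := pv_tail hN (by linarith) (by omega) (by omega)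
      linarith

open scoped ZeroAtInfty

lemma c0_tendsto (x : C₀(ℕ, ℂ)) : Filter.Tendsto (fun n => ‖x n‖) Filter.atTop (nhds 0) := by
  have h0 := ZeroAtInftyContinuousMapClass.zero_at_infty x
  rw [Filter.cocompact_eq_cofinite, Nat.cofinite_eq_atTop] at h0
  simpa using h0.norm

lemma c0_coord (x : C₀(ℕ, ℂ)) (n : ℕ) : ‖x n‖ ≤ ‖x‖ := by
  rw [← ZeroAtInftyContinuousMap.norm_toBCF_eq_norm]
  exact BoundedContinuousFunction.norm_coe_le_norm x.toBCF n

lemma c0_norm_le (x : C₀(ℕ, ℂ)) {C : ℝ} (h0 : 0 ≤ C) (h : ∀ n, ‖x n‖ ≤ C) : ‖x‖ ≤ C := by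
  rw [← ZeroAtInftyContinuousMap.norm_toBCF_eq_norm]
  exact (BoundedContinuousFunction.norm_le h0).mpr h

def Jfun (x : C₀(ℕ, ℂ)) : C(K2, ℂ) :=
  ⟨fun p => val (⇑x) ↑p, cont_val _ (c0_tendsto x)⟩

lemma Jfun_apply (x : C₀(ℕ, ℂ)) (p : K2) : Jfun x p = val (⇑x) ↑p := rfl

def Jiso : C₀(ℕ, ℂ) →ₗᵢ[ℂ] C(K2, ℂ) where
  toFun := Jfun
  map_add' x y := by
    ext p
    simp only [Jfun_apply, ContinuousMap.add_apply]
    rw [show ⇑(x + y) = ⇑x + ⇑y from rfl, val_add]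
  map_smul' c x := by
    ext p
    simp only [Jfun_apply, ContinuousMap.smul_apply, RingHom.id_apply]
    rw [show ⇑(c • x) = c • ⇑x from rfl, val_smul]
    rfl
  norm_map' x := by
    apply le_antisymm
    · rw [ContinuousMap.norm_le _ (norm_nonneg x)]
      intro p
      exact val_bound (c0_coord x) (norm_nonneg x) ↑p
    · apply c0_norm_le x (norm_nonneg _)
      intro n
      have h1 : x n = (Jfun x) (ptt n 1 le_rfl) := by
        rw [Jfun_apply, ptt, val_eval]
        simp [pv]
      rw [h1]
      exact ContinuousMap.norm_coe_le_norm (Jfun x) _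

lemma Jiso_eval (x : C₀(ℕ, ℂ)) (m k : ℕ) (hk : 1 ≤ k) :
    Jiso x (ptt m k hk) = pv (⇑x) m k := by
  show Jfun x (ptt m k hk) = _
  rw [Jfun_apply, ptt, val_eval]

end Part2

namespace Core
open scoped ZeroAtInfty
open Complex ComplexConjugate Part2 C0SPRaux

lemma nsq_diff {u v : ℂ} {c d : ℝ} (h : |‖u‖ - ‖v‖| ≤ c) (hu : ‖u‖ ≤ d) (hv : ‖v‖ ≤ d) :
    |Complex.normSq u - Complex.normSq v| ≤ c * (2*d) := by
  have h1 : Complex.normSq u = ‖u‖^2 := by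
    rw [Complex.normSq_eq_norm_sq]
  have h2 : Complex.normSq v = ‖v‖^2 := by
    rw [Complex.normSq_eq_norm_sq]
  rw [h1, h2]
  rw [abs_le] at h ⊢
  constructor <;> nlinarith [norm_nonneg u, norm_nonneg v]

lemma re_formula (a b : ℂ) : (a * conj b).re =
    (Complex.normSq (a + b) - Complex.normSq a - Complex.normSq b)/2 := by
  simp only [Complex.normSq_apply, Complex.mul_re, Complex.add_re, Complex.add_im,
    Complex.conj_re, Complex.conj_im]
  ring

lemma im_formula (a b : ℂ) : (a * conj b).im =
    (Complex.normSq (a + I * b) - Complex.normSq a - Complex.normSq b)/2 := by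
  simp only [Complex.normSq_apply, Complex.mul_im, Complex.mul_re, Complex.add_re, Complex.add_im,
    Complex.conj_re, Complex.conj_im, Complex.I_re, Complex.I_im]
  ring

lemma core (x y : C₀(ℕ, ℂ)) (ε : ℝ) (hε : 0 ≤ ε)
    (h1 : ∀ n, |‖x n‖ - ‖y n‖| ≤ ε)
    (h2 : ∀ m n, m < n → |‖x m + x n‖ - ‖y m + y n‖| ≤ 2*ε)
    (h3 : ∀ m n, m < n → |‖x m + I * x n‖ - ‖y m + I * y n‖| ≤ 2*ε) :
    ∃ l : ℂ, ‖l‖ = 1 ∧ ∀ n, ‖x n - l * y n‖ ≤ 121 * ε := by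
  set S := ‖x‖ with hS
  have hS0 : 0 ≤ S := norm_nonneg x
  have hxb : ∀ n, ‖x n‖ ≤ S := c0_coord x
  have hyb : ∀ n, ‖y n‖ ≤ S + ε := by
    intro n
    have ha := abs_le.mp (h1 n)
    have := hxb n
    linarith
  by_cases hcase : S ≤ 60 * ε
  · refine ⟨1, norm_one, fun n => ?_⟩
    rw [one_mul]
    calc ‖x n - y n‖ ≤ ‖x n‖ + ‖y n‖ := norm_sub_le _ _
      _ ≤ S + (S + ε) := add_le_add (hxb n) (hyb n)
      _ ≤ 121 * ε := by linarith
  · push_neg at hcase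
    obtain ⟨m, hm⟩ : ∃ m, S/2 < ‖x m‖ := by
      by_contra hc
      push_neg at hc
      have := c0_norm_le x (by linarith) hc
      linarith
    set α := ‖x m‖ with hαdef
    set β := ‖y m‖ with hβdef
    have hαβ := abs_le.mp (h1 m)
    have hα0 : 0 < α := lt_of_le_of_lt (by linarith) hm
    have hβ0 : 0 < β := by linarith
    set B := S + ε with hB
    have hB0 : 0 < B := by linarith
    clear_value S α β B
    have key : ∀ a b : ℕ, a < b → ‖x a * conj (x b) - y a * conj (y b)‖ ≤ 12 * (ε * B) := by
      intro a b hab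
      have hre : (x a * conj (x b)).re - (y a * conj (y b)).re =
          ((normSq (x a + x b) - normSq (y a + y b)) - (normSq (x a) - normSq (y a))
            - (normSq (x b) - normSq (y b)))/2 := by
        rw [re_formula, re_formula]; ring
      have him : (x a * conj (x b)).im - (y a * conj (y b)).im =
          ((normSq (x a + I * x b) - normSq (y a + I * y b)) - (normSq (x a) - normSq (y a))
            - (normSq (x b) - normSq (y b)))/2 := by
        rw [im_formula, im_formula]; ring
      have e1 : |normSq (x a + x b) - normSq (y a + y b)| ≤ (2*ε) * (2*(2*B)) := by
        apply nsq_diff (h2 a b hab)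
        · calc ‖x a + x b‖ ≤ ‖x a‖ + ‖x b‖ := norm_add_le _ _
            _ ≤ 2*B := by have := hxb a; have := hxb b; rw [hB]; linarith
        · calc ‖y a + y b‖ ≤ ‖y a‖ + ‖y b‖ := norm_add_le _ _
            _ ≤ 2*B := by have := hyb a; have := hyb b; rw [hB]; linarith
      have e1' : |normSq (x a + I * x b) - normSq (y a + I * y b)| ≤ (2*ε) * (2*(2*B)) := by
        apply nsq_diff (h3 a b hab)
        · calc ‖x a + I * x b‖ ≤ ‖x a‖ + ‖I * x b‖ := norm_add_le _ _
            _ ≤ 2*B := by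
                rw [norm_mul, Complex.norm_I, one_mul]
                have := hxb a; have := hxb b; rw [hB]; linarith
        · calc ‖y a + I * y b‖ ≤ ‖y a‖ + ‖I * y b‖ := norm_add_le _ _
            _ ≤ 2*B := by
                rw [norm_mul, Complex.norm_I, one_mul]
                have := hyb a; have := hyb b; rw [hB]; linarith
      have e2 : |normSq (x a) - normSq (y a)| ≤ ε * (2*B) :=
        nsq_diff (h1 a) (le_trans (hxb a) (by rw [hB]; linarith)) (le_trans (hyb a) (by rw [hB]))
      have e3 : |normSq (x b) - normSq (y b)| ≤ ε * (2*B) :=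
        nsq_diff (h1 b) (le_trans (hxb b) (by rw [hB]; linarith)) (le_trans (hyb b) (by rw [hB]))
      have hren : |(x a * conj (x b) - y a * conj (y b)).re| ≤ 6 * (ε*B) := by
        rw [Complex.sub_re, hre]
        obtain ⟨q1a, q1b⟩ := abs_le.mp e1
        obtain ⟨q2a, q2b⟩ := abs_le.mp e2
        obtain ⟨q3a, q3b⟩ := abs_le.mp e3
        rw [abs_le]
        constructor <;> linarith
      have himn : |(x a * conj (x b) - y a * conj (y b)).im| ≤ 6 * (ε*B) := by
        rw [Complex.sub_im, him]
        obtain ⟨q1a, q1b⟩ := abs_le.mp e1'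
        obtain ⟨q2a, q2b⟩ := abs_le.mp e2
        obtain ⟨q3a, q3b⟩ := abs_le.mp e3
        rw [abs_le]
        constructor <;> linarith
      calc ‖x a * conj (x b) - y a * conj (y b)‖
          ≤ |(x a * conj (x b) - y a * conj (y b)).re| + |(x a * conj (x b) - y a * conj (y b)).im| := by
            exact Complex.norm_le_abs_re_add_abs_im _
        _ ≤ 12 * (ε * B) := by linarith
    have key' : ∀ n, n ≠ m → ‖x n * conj (x m) - y n * conj (y m)‖ ≤ 12 * (ε * B) := by
      intro n hn
      rcases lt_or_gt_of_ne hn with h | h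
      · exact key n m h
      · have hk := key m n h
        have hconj : x n * conj (x m) - y n * conj (y m) =
            conj (x m * conj (x n) - y m * conj (y n)) := by
          simp only [map_sub, map_mul, Complex.conj_conj]
          ring
        rw [hconj, RCLike.norm_conj]
        exact hk
    set l : ℂ := (x m * conj (y m)) / ((α : ℂ) * (β : ℂ)) with hl
    have hlnorm : ‖l‖ = 1 := by
      have hn1 : ‖x m * conj (y m)‖ = α * β := by
        rw [norm_mul, RCLike.norm_conj, hαdef, hβdef]
      have hn2 : ‖((α:ℂ) * (β:ℂ))‖ = α * β := by
        rw [norm_mul, Complex.norm_real, Complex.norm_real, Real.norm_eq_abs, Real.norm_eq_abs,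
          abs_of_pos hα0, abs_of_pos hβ0]
      rw [hl, norm_div, hn1, hn2, div_self (by positivity)]
    have hyc : conj (y m) * y m = ((β*β : ℝ) : ℂ) := by
      rw [mul_comm, Complex.mul_conj, hβdef]
      norm_cast
      rw [Complex.normSq_eq_norm_sq]
      ring
    have hxc : conj (x m) * x m = ((α*α : ℝ) : ℂ) := by
      rw [mul_comm, Complex.mul_conj, hαdef]
      norm_cast
      rw [Complex.normSq_eq_norm_sq]
      ring
    have hαc : ((α:ℝ) : ℂ) ≠ 0 := Complex.ofReal_ne_zero.mpr hα0.ne'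
    have hβc : ((β:ℝ) : ℂ) ≠ 0 := Complex.ofReal_ne_zero.mpr hβ0.ne'
    refine ⟨l, hlnorm, fun n => ?_⟩
    by_cases hnm : n = m
    · subst hnm
      have e : l * y n = ((β/α : ℝ) : ℂ) * x n := by
        rw [hl, div_mul_eq_mul_div, mul_assoc, hyc]
        rw [div_eq_iff (mul_ne_zero hαc hβc)]
        push_cast
        field_simp
      have hx_sub : x n - l * y n = ((1 - β/α : ℝ) : ℂ) * x n := by
        rw [e]; push_cast; ring
      rw [hx_sub, norm_mul, Complex.norm_real, Real.norm_eq_abs, ← hαdef]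
      have h7 : |1 - β/α| = |α - β|/α := by
        rw [show (1 - β/α) = (α-β)/α from by
          rw [eq_div_iff hα0.ne', sub_mul, div_mul_cancel₀ _ hα0.ne']; ring, abs_div,
          abs_of_pos hα0]
      rw [h7, div_mul_cancel₀ _ hα0.ne']
      have h8 : |α - β| ≤ ε := by rw [hαdef, hβdef]; exact abs_le.mpr hαβ
      linarith
    · have e1 : conj (x m) * l = ((α/β : ℝ) : ℂ) * conj (y m) := by
        rw [hl, mul_div_assoc', ← mul_assoc, hxc]
        rw [div_eq_iff (mul_ne_zero hαc hβc)]
        push_cast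
        field_simp
      have e2 : conj (x m) * (x n - l * y n) =
          (x n * conj (x m) - y n * conj (y m)) + ((1 - α/β : ℝ) : ℂ) * (y n * conj (y m)) := by
        rw [mul_sub, ← mul_assoc, e1]
        push_cast
        field_simp
        ring
      have hstep : α * ‖x n - l * y n‖ ≤ 13 * (ε * B) := by
        have hnm' : ‖conj (x m) * (x n - l * y n)‖ = α * ‖x n - l * y n‖ := by
          rw [norm_mul, RCLike.norm_conj, ← hαdef]
        rw [← hnm', e2]
        have t1 := key' n hnm
        have t2 : ‖((1 - α/β : ℝ) : ℂ) * (y n * conj (y m))‖ ≤ ε * B := by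
          rw [norm_mul, Complex.norm_real, Real.norm_eq_abs, norm_mul, RCLike.norm_conj,
            ← hβdef]
          have h8 : |1 - α/β| = |β - α|/β := by
            rw [show (1 - α/β) = (β-α)/β from by
              rw [eq_div_iff hβ0.ne', sub_mul, div_mul_cancel₀ _ hβ0.ne']; ring, abs_div,
              abs_of_pos hβ0]
          rw [h8]
          have h9 : |β - α| ≤ ε := by
            rw [abs_sub_comm, hαdef, hβdef]
            exact abs_le.mpr hαβ
          have h10 : ‖y n‖ ≤ B := hyb n
          calc |β-α|/β * (‖y n‖ * β) = |β-α| * ‖y n‖ := by field_simp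
            _ ≤ ε * B := mul_le_mul h9 h10 (norm_nonneg _) hε
        calc ‖(x n * conj (x m) - y n * conj (y m)) + ((1 - α/β : ℝ) : ℂ) * (y n * conj (y m))‖
            ≤ ‖x n * conj (x m) - y n * conj (y m)‖ + ‖((1 - α/β : ℝ) : ℂ) * (y n * conj (y m))‖ :=
              norm_add_le _ _
          _ ≤ 12*(ε*B) + ε*B := add_le_add t1 t2
          _ = 13*(ε*B) := by ring
      have hfin : α * ‖x n - l * y n‖ ≤ α * (121 * ε) := by
        refine le_trans hstep ?_
        rw [hB]
        nlinarith [mul_le_mul_of_nonneg_left hm.le hε, mul_le_mul_of_nonneg_left hcase.le hε]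
      exact le_of_mul_le_mul_left hfin hα0

end Core


/-- Over the complex field, there is a linear isometric embedding of `c₀` into
`C₀[1, ω²) = {f ∈ C([1, ω²]) : f (ω²) = 0}` whose range does SPR. -/
theorem c0_SPR_embedding_into_C0_omega_sq :
    ∃ J : C₀(ℕ, ℂ) →ₗᵢ[ℂ]
        C(Set.Icc (1 : Ordinal.{0}) (Ordinal.omega0 ^ (2 : Ordinal.{0})), ℂ),
      (∀ x : C₀(ℕ, ℂ), J x omegaSqTop = 0) ∧
      DoesSPR (LinearMap.range J.toLinearMap) := by
  refine ⟨Part2.Jiso, ?_, ?_⟩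
  · intro x
    show C0SPRaux.val (⇑x) ((omegaSqTop : Part2.K2) : Ordinal) = 0
    have h : ((omegaSqTop : Part2.K2) : Ordinal) = Ordinal.omega0 ^ (2 : Ordinal) := rfl
    rw [h, C0SPRaux.omega_sq, C0SPRaux.val_top]
  · refine ⟨121, by norm_num, ?_⟩
    rintro f hf g hg
    obtain ⟨x, rfl⟩ := hf
    obtain ⟨y, rfl⟩ := hg
    simp only [LinearIsometry.coe_toLinearMap]
    set ε := ‖cmAbs (Part2.Jiso x) - cmAbs (Part2.Jiso y)‖ with hεdef
    have hε0 : 0 ≤ ε := norm_nonneg _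
    have hpt : ∀ p : Part2.K2, |‖(Part2.Jiso x) p‖ - ‖(Part2.Jiso y) p‖| ≤ ε := by
      intro p
      have h := ContinuousMap.norm_coe_le_norm (cmAbs (Part2.Jiso x) - cmAbs (Part2.Jiso y)) p
      have h2 : (cmAbs (Part2.Jiso x) - cmAbs (Part2.Jiso y)) p
          = ‖(Part2.Jiso x) p‖ - ‖(Part2.Jiso y) p‖ := rfl
      rw [h2, Real.norm_eq_abs] at h
      exact h
    have h2c : ‖(2:ℂ)‖ = 2 := by norm_num
    have h1 : ∀ n, |‖x n‖ - ‖y n‖| ≤ ε := by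
      intro n
      have h := hpt (Part2.ptt n 1 le_rfl)
      rw [Part2.Jiso_eval, Part2.Jiso_eval] at h
      simpa [C0SPRaux.pv] using h
    have h2 : ∀ m n, m < n → |‖x m + x n‖ - ‖y m + y n‖| ≤ 2*ε := by
      intro m n hmn
      have h := hpt (Part2.ptt m (2*(n-m)) (by omega))
      rw [Part2.Jiso_eval, Part2.Jiso_eval] at h
      have hpv : ∀ z : C₀(ℕ, ℂ), C0SPRaux.pv (⇑z) m (2*(n-m)) = (z m + z n)/2 := by
        intro z
        simp only [C0SPRaux.pv]
        rw [if_neg (by omega), if_neg (by omega), if_pos (by omega)]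
        have he : (2*(n-m))/2 = n - m := by omega
        rw [he, show m + (n-m) = n by omega]
      rw [hpv, hpv, norm_div, norm_div, h2c] at h
      obtain ⟨ha, hb⟩ := abs_le.mp h
      rw [abs_le]
      constructor <;> linarith
    have h3 : ∀ m n, m < n →
        |‖x m + Complex.I * x n‖ - ‖y m + Complex.I * y n‖| ≤ 2*ε := by
      intro m n hmn
      have h := hpt (Part2.ptt m (2*(n-m)+1) (by omega))
      rw [Part2.Jiso_eval, Part2.Jiso_eval] at h
      have hpv : ∀ z : C₀(ℕ, ℂ),
          C0SPRaux.pv (⇑z) m (2*(n-m)+1) = (z m + Complex.I * z n)/2 := by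
        intro z
        simp only [C0SPRaux.pv]
        rw [if_neg (by omega), if_neg (by omega), if_neg (by omega)]
        have he : (2*(n-m)+1)/2 = n - m := by omega
        rw [he, show m + (n-m) = n by omega]
      rw [hpv, hpv, norm_div, norm_div, h2c] at h
      obtain ⟨ha, hb⟩ := abs_le.mp h
      rw [abs_le]
      constructor <;> linarith
    obtain ⟨l, hl1, hl2⟩ := Core.core x y ε hε0 h1 h2 h3
    have hnormc : ‖x - l • y‖ ≤ 121 * ε := by
      apply Part2.c0_norm_le _ (by positivity)
      intro n
      have he : (x - l • y) n = x n - l * y n := rfl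
      rw [he]
      exact hl2 n
    have hbdd : BddBelow (Set.range fun l' : {c : ℂ // ‖c‖ = 1} =>
        ‖Part2.Jiso x - (l' : ℂ) • Part2.Jiso y‖) := by
      refine ⟨0, ?_⟩
      rintro r ⟨l', rfl⟩
      exact norm_nonneg _
    refine le_trans (ciInf_le hbdd ⟨l, hl1⟩) ?_
    have hmap : Part2.Jiso x - l • Part2.Jiso y = Part2.Jiso (x - l • y) := by
      rw [map_sub, map_smul]
    rw [hmap, Part2.Jiso.norm_map]
    linarith

end
end

section
/- Let K be a scattered compact Hausdorff space whose derived set K′ is infinite, with scalars real or complex. Then there exists a linear isometric embedding T : C₀[1, ω²) → C(K) that preserves moduli, i.e., T(|f|) = |Tf| for every f ∈ C₀[1, ω²). Consequently, C(K) contains a closed subspace isometric to c₀ that does SPR. -/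
open scoped ZeroAtInfty

noncomputable section

/-- The pointwise modulus of a continuous function, as a `𝕜`-valued continuous function. -/
def kAbs {K : Type*} [TopologicalSpace K] {𝕜 : Type*} [RCLike 𝕜]
    (f : C(K, 𝕜)) : C(K, 𝕜) :=
  ⟨fun x => algebraMap ℝ 𝕜 ‖f x‖,
    (continuous_algebraMap ℝ 𝕜).comp (map_continuous f).norm⟩

/-- `C₀[1, ω²)`: the subspace of `C([1, ω²])` of functions vanishing at `ω²`. -/
def C0sub (𝕜 : Type*) [RCLike 𝕜] :
    Submodule 𝕜 C(Set.Icc (1 : Ordinal.{0}) (Ordinal.omega0 ^ (2 : Ordinal.{0})), 𝕜) where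
  carrier := {f | f omegaSqTop = 0}
  add_mem' := by
    intro a b ha hb
    simp only [Set.mem_setOf_eq, ContinuousMap.add_apply] at *
    rw [ha, hb, add_zero]
  zero_mem' := rfl
  smul_mem' := by
    intro c f hf
    simp only [Set.mem_setOf_eq, ContinuousMap.smul_apply] at *
    rw [hf, smul_zero]

theorem kAbs_mem {𝕜 : Type*} [RCLike 𝕜] (f : C0sub 𝕜) :
    kAbs (f : C(Set.Icc (1 : Ordinal.{0}) (Ordinal.omega0 ^ (2 : Ordinal.{0})), 𝕜)) ∈
      C0sub 𝕜 := by
  have h : (f : C(Set.Icc (1 : Ordinal.{0}) (Ordinal.omega0 ^ (2 : Ordinal.{0})), 𝕜))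
      omegaSqTop = 0 := f.2
  show kAbs _ omegaSqTop = 0
  simp [kAbs, h]

noncomputable section AuxProof
open Ordinal

lemma om2_eq : (Ordinal.omega0 ^ (2 : Ordinal)) = omega0 * omega0 := by
  rw [show (2:Ordinal) = 1 + 1 from by norm_num, opow_add, opow_one]

def ordN (o : Ordinal) : ℕ :=
  if h : o < omega0 then (Ordinal.lt_omega0.mp h).choose else 0

lemma ordN_spec {o : Ordinal} (h : o < omega0) : (ordN o : Ordinal) = o := by
  rw [ordN, dif_pos h]; exact (Ordinal.lt_omega0.mp h).choose_spec.symm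

lemma ordN_coe (n : ℕ) : ordN (n : Ordinal) = n := by
  have := ordN_spec (Ordinal.nat_lt_omega0 n)
  exact_mod_cast this

variable {𝕜 : Type*} [RCLike 𝕜]

def coef (q : ℕ) : 𝕜 :=
  (if q % 2 = 0 then 1 else RCLike.I) * ((2⁻¹ : ℝ) : 𝕜)

lemma norm_I_le_one : ‖(RCLike.I : 𝕜)‖ ≤ 1 := by
  rcases RCLike.I_mul_I_ax (K := 𝕜) with h | h
  · simp [h]
  · have h2 : ‖(RCLike.I : 𝕜)‖ * ‖(RCLike.I : 𝕜)‖ = 1 := by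
      rw [← norm_mul, h, norm_neg, norm_one]
    nlinarith [norm_nonneg (RCLike.I : 𝕜)]

lemma norm_coef_le (q : ℕ) : ‖(coef q : 𝕜)‖ ≤ 2⁻¹ := by
  rw [coef, norm_mul]
  have h1 : ‖((2⁻¹:ℝ) : 𝕜)‖ = 2⁻¹ := by rw [RCLike.norm_ofReal]; norm_num
  rw [h1]
  split
  · simp
  · nlinarith [norm_I_le_one (𝕜 := 𝕜)]

def rowVal (a : ℕ → 𝕜) (n k : ℕ) : 𝕜 :=
  if k = 0 then a n
  else ((2/3 : ℝ) : 𝕜) * (a n + coef (k-1) * a (n + 1 + (k-1)/2))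

lemma norm_two_thirds : ‖((2/3 : ℝ) : 𝕜)‖ = 2/3 := by
  rw [RCLike.norm_ofReal]; norm_num

lemma norm_rowVal_le {a : ℕ → 𝕜} {A : ℝ} {n : ℕ} (hA : ∀ i, n ≤ i → ‖a i‖ ≤ A) (k : ℕ) :
    ‖rowVal a n k‖ ≤ A := by
  have h0 : 0 ≤ A := le_trans (norm_nonneg _) (hA n le_rfl)
  rw [rowVal]
  split
  · exact hA n le_rfl
  · rw [norm_mul, norm_two_thirds]
    have h2 : ‖a n + coef (k-1) * a (n + 1 + (k-1)/2)‖ ≤ A + 2⁻¹ * A := by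
      calc ‖a n + coef (k-1) * a (n + 1 + (k-1)/2)‖
          ≤ ‖a n‖ + ‖coef (k-1) * a (n + 1 + (k-1)/2)‖ := norm_add_le _ _
        _ ≤ A + 2⁻¹ * A := by
            rw [norm_mul]
            have := hA (n + 1 + (k-1)/2) (by omega)
            have := hA n le_rfl
            have := norm_coef_le (𝕜 := 𝕜) (k-1)
            nlinarith [norm_nonneg (a (n + 1 + (k-1)/2))]
    nlinarith

def Sfun (a : ℕ → 𝕜) (p : Ordinal) : 𝕜 :=
  if p < omega0 * omega0 then
    (if p % omega0 = 0 then ((2/3 : ℝ) : 𝕜) * a (ordN (p / omega0) - 1)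
     else rowVal a (ordN (p / omega0)) (ordN (p % omega0) - 1))
  else 0

lemma grid_div (n k : ℕ) : (omega0 * n + k) / omega0 = (n : Ordinal) := by
  rw [Ordinal.mul_add_div _ omega0_ne_zero, Ordinal.div_eq_zero_of_lt (nat_lt_omega0 k), add_zero]

lemma grid_mod (n k : ℕ) : (omega0 * n + k) % omega0 = (k : Ordinal) := by
  rw [Ordinal.mul_add_mod_self, Ordinal.mod_eq_of_lt (nat_lt_omega0 k)]

lemma grid_lt (n k : ℕ) : omega0 * n + k < omega0 * omega0 := by
  calc omega0 * n + (k : Ordinal) < omega0 * n + omega0 :=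
        add_lt_add_right (nat_lt_omega0 k) _
    _ = omega0 * ((n : Ordinal) + 1) := by rw [mul_add, mul_one]
    _ ≤ omega0 * omega0 := by
        apply mul_le_mul_right
        have : ((n : Ordinal) + 1) = ((n + 1 : ℕ) : Ordinal) := by push_cast; ring
        rw [this]
        exact (nat_lt_omega0 (n+1)).le

lemma Sfun_eval (a : ℕ → 𝕜) (n k : ℕ) :
    Sfun a (omega0 * n + ((k + 1 : ℕ) : Ordinal)) = rowVal a n k := by
  rw [Sfun, if_pos (grid_lt n (k+1)), grid_mod, grid_div]
  rw [if_neg (by exact_mod_cast Nat.succ_ne_zero k), ordN_coe, ordN_coe]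
  simp

lemma Sfun_limit (a : ℕ → 𝕜) (n : ℕ) :
    Sfun a (omega0 * ((n + 1 : ℕ) : Ordinal)) = ((2/3 : ℝ) : 𝕜) * a n := by
  have hlt : omega0 * ((n + 1 : ℕ) : Ordinal) < omega0 * omega0 :=
    mul_lt_mul_of_pos_left (nat_lt_omega0 (n+1)) omega0_pos
  rw [Sfun, if_pos hlt, Ordinal.mul_mod, if_pos rfl, Ordinal.mul_div_cancel _ omega0_ne_zero,
    ordN_coe]
  simp

lemma Sfun_top (a : ℕ → 𝕜) : Sfun a (omega0 * omega0) = 0 := if_neg (lt_irrefl _)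

lemma norm_Sfun_le (a : ℕ → 𝕜) {A : ℝ} (hA : ∀ i, ‖a i‖ ≤ A) (p : Ordinal) :
    ‖Sfun a p‖ ≤ A := by
  have h0 : 0 ≤ A := le_trans (norm_nonneg _) (hA 0)
  rw [Sfun]
  split
  · split
    · rw [norm_mul, norm_two_thirds]
      nlinarith [hA (ordN (p / omega0) - 1), norm_nonneg (a (ordN (p / omega0) - 1))]
    · exact norm_rowVal_le (fun i _ => hA i) _
  · simpa using h0


-- decomposition of an ordinal < ω*ω
lemma ord_decomp {p : Ordinal} (h : p < omega0 * omega0) :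
    ∃ n k : ℕ, p = omega0 * n + k := by
  have hdiv : p / omega0 < omega0 := (Ordinal.div_lt omega0_ne_zero).mpr h
  have hmod : p % omega0 < omega0 := Ordinal.mod_lt p omega0_ne_zero
  obtain ⟨n, hn⟩ := Ordinal.lt_omega0.mp hdiv
  obtain ⟨k, hk⟩ := Ordinal.lt_omega0.mp hmod
  exact ⟨n, k, by rw [← hn, ← hk, Ordinal.div_add_mod]⟩

-- continuity helper on a subset of ordinals
lemma continuousAt_of_Ioc {X : Type*} [PseudoMetricSpace X] {S : Set Ordinal}
    (f : S → X) (p : S) (hp : p.1 ≠ 0)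
    (h : ∀ ε > 0, ∃ b < p.1, ∀ q : S, b < q.1 → q.1 ≤ p.1 → dist (f q) (f p) < ε) :
    ContinuousAt f p := by
  rw [ContinuousAt, nhds_subtype_eq_comap, Metric.tendsto_nhds]
  intro ε hε
  obtain ⟨b, hb1, hb2⟩ := h ε hε
  rw [((SuccOrder.hasBasis_nhds_Ioc_of_exists_lt ⟨0, pos_iff_ne_zero.mpr hp⟩).comap (Subtype.val : S → Ordinal)).eventually_iff]
  exact ⟨b, hb1, fun q hq => hb2 q hq.1 hq.2⟩


lemma c0_tail {𝕜 : Type*} [RCLike 𝕜] (a : C₀(ℕ, 𝕜)) {ε : ℝ} (hε : 0 < ε) :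
    ∃ J : ℕ, ∀ j, J ≤ j → ‖a j‖ < ε := by
  have h : Filter.Tendsto (⇑a) (Filter.cocompact ℕ) (nhds 0) := zero_at_infty a
  rw [Filter.cocompact_eq_cofinite, Nat.cofinite_eq_atTop] at h
  have h2 := Metric.tendsto_nhds.mp h ε hε
  rw [Filter.eventually_atTop] at h2
  obtain ⟨J, hJ⟩ := h2
  exact ⟨J, fun j hj => by simpa [dist_zero_right] using hJ j hj⟩

abbrev Icc2 : Set Ordinal.{0} := Set.Icc (1 : Ordinal.{0}) (Ordinal.omega0 ^ (2 : Ordinal.{0}))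

variable {𝕜 : Type*} [RCLike 𝕜]

lemma nat_le_of_ord_le {n m : ℕ} (h : (n : Ordinal) ≤ (m : Ordinal)) : n ≤ m := by
  exact_mod_cast h

lemma Smap_continuous (a : C₀(ℕ, 𝕜)) : Continuous fun p : Icc2 => Sfun (⇑a) p.1 := by
  rw [continuous_iff_continuousAt]
  intro p
  have hp1 : (1 : Ordinal) ≤ p.1 := p.2.1
  have hp0 : p.1 ≠ 0 := by
    intro h
    rw [h] at hp1
    exact absurd hp1 (by norm_num)
  apply continuousAt_of_Ioc _ _ hp0
  intro ε hε
  rcases lt_or_eq_of_le p.2.2 with hlt | htop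
  · -- p.1 < ω²
    rw [om2_eq] at hlt
    obtain ⟨N, K, hNK⟩ := ord_decomp hlt
    rcases Nat.eq_zero_or_pos K with hK0 | hKpos
    · -- limit point ω*N, N = N''+1
      subst hK0
      have hN : N ≠ 0 := by
        rintro rfl
        simp at hNK
        exact hp0 hNK
      obtain ⟨N'', rfl⟩ := Nat.exists_eq_succ_of_ne_zero hN
      obtain ⟨J, hJ⟩ := c0_tail a hε
      have hpval : p.1 = omega0 * ((N'' + 1 : ℕ) : Ordinal) := by
        rw [hNK]; simp
      have hfp : Sfun (⇑a) p.1 = ((2/3 : ℝ) : 𝕜) * a N'' := by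
        rw [hpval, Sfun_limit]
      refine ⟨omega0 * N'' + ((2*J+2 : ℕ) : Ordinal), ?_, ?_⟩
      · rw [hpval]
        calc omega0 * N'' + ((2*J+2 : ℕ) : Ordinal) < omega0 * N'' + omega0 :=
              add_lt_add_right (nat_lt_omega0 _) _
          _ = omega0 * ((N'' + 1 : ℕ) : Ordinal) := by push_cast; rw [mul_add, mul_one]
      · intro q hq1 hq2
        rcases eq_or_lt_of_le hq2 with heq | hlt2
        · have : q = p := Subtype.ext heq
          rw [this]
          simpa using hε
        · have hqlt : q.1 < omega0 * omega0 := lt_trans hlt2 hlt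
          obtain ⟨M, L, hML⟩ := ord_decomp hqlt
          -- M = N''
          have hMval : (q.1 / omega0) = (M : Ordinal) := by rw [hML, grid_div]
          have hM1 : (N'' : Ordinal) ≤ (M : Ordinal) := by
            rw [← hMval, Ordinal.le_div omega0_ne_zero]
            calc omega0 * (N'' : Ordinal) ≤ omega0 * N'' + ((2*J+2 : ℕ) : Ordinal) :=
                  le_self_add
              _ ≤ q.1 := hq1.le
          have hM2 : (M : Ordinal) < ((N'' + 1 : ℕ) : Ordinal) := by
            rw [← hMval, Ordinal.div_lt omega0_ne_zero]
            rw [hpval] at hlt2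
            exact hlt2
          have hMeq : M = N'' := by
            have h1 := nat_le_of_ord_le hM1
            have h2 : M < N'' + 1 := by exact_mod_cast hM2
            omega
          subst hMeq
          -- L > 2J+2
          have hL : ((2*J+2 : ℕ) : Ordinal) < (L : Ordinal) := by
            rw [hML] at hq1
            exact lt_of_add_lt_add_left hq1
          have hLn : 2*J+2 < L := by exact_mod_cast hL
          obtain ⟨L', rfl⟩ := Nat.exists_eq_succ_of_ne_zero (by omega : L ≠ 0)
          have hqval : Sfun (⇑a) q.1 = rowVal (⇑a) M L' := by
            rw [hML, Sfun_eval]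
          rw [dist_eq_norm, hqval, hfp, rowVal, if_neg (by omega : L' ≠ 0)]
          have hsub : ((2/3 : ℝ) : 𝕜) * (a M + coef (L'-1) * a (M + 1 + (L'-1)/2))
              - ((2/3 : ℝ) : 𝕜) * a M = ((2/3 : ℝ) : 𝕜) * (coef (L'-1) * a (M + 1 + (L'-1)/2)) := by
            ring
          rw [hsub, norm_mul, norm_mul, norm_two_thirds]
          have hj : J ≤ M + 1 + (L'-1)/2 := by omega
          have := hJ _ hj
          have := norm_coef_le (𝕜 := 𝕜) (L'-1)
          nlinarith [norm_nonneg (a (M + 1 + (L'-1)/2))]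
    · -- successor point
      obtain ⟨K0, rfl⟩ := Nat.exists_eq_succ_of_ne_zero (Nat.pos_iff_ne_zero.mp hKpos)
      refine ⟨omega0 * N + (K0 : ℕ), ?_, ?_⟩
      · rw [hNK]
        apply add_lt_add_right
        exact_mod_cast Nat.lt_succ_self K0
      · intro q hq1 hq2
        have hsucc : p.1 = (omega0 * N + (K0 : ℕ)) + 1 := by
          rw [hNK]; push_cast; rw [add_assoc]
        have : q.1 = p.1 := by
          rw [hsucc]
          refine le_antisymm (hsucc ▸ hq2) ?_
          rwa [Ordinal.add_one_eq_succ, Order.succ_le_iff]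
        have : q = p := Subtype.ext this
        rw [this]
        simpa using hε
  · -- p.1 = ω²
    have htop' : p.1 = omega0 * omega0 := by rw [htop, om2_eq]
    have hfp : Sfun (⇑a) p.1 = 0 := by rw [htop']; exact Sfun_top _
    obtain ⟨J, hJ⟩ := c0_tail a (half_pos hε)
    refine ⟨omega0 * ((J+1 : ℕ) : Ordinal), ?_, ?_⟩
    · rw [htop']
      exact mul_lt_mul_of_pos_left (nat_lt_omega0 _) omega0_pos
    · intro q hq1 hq2
      rcases eq_or_lt_of_le hq2 with heq | hlt2
      · have : q = p := Subtype.ext heq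
        rw [this]
        simpa using hε
      · have hqlt : q.1 < omega0 * omega0 := htop' ▸ hlt2
        obtain ⟨M, L, hML⟩ := ord_decomp hqlt
        have hMval : (q.1 / omega0) = (M : Ordinal) := by rw [hML, grid_div]
        have hM1 : ((J+1 : ℕ) : Ordinal) ≤ (M : Ordinal) := by
          rw [← hMval, Ordinal.le_div omega0_ne_zero]
          exact hq1.le
        have hMn : J + 1 ≤ M := nat_le_of_ord_le hM1
        rw [dist_eq_norm, hfp, _root_.sub_zero]
        have htail : ∀ i, M ≤ i → ‖a i‖ ≤ ε/2 := fun i hi => (hJ i (by omega)).le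
        rcases Nat.eq_zero_or_pos L with hL0 | hLpos
        · subst hL0
          obtain ⟨M', rfl⟩ := Nat.exists_eq_succ_of_ne_zero (by omega : M ≠ 0)
          have hqval : Sfun (⇑a) q.1 = ((2/3 : ℝ) : 𝕜) * a M' := by
            rw [hML]
            simpa using Sfun_limit (⇑a) M'
          rw [hqval, norm_mul, norm_two_thirds]
          have := hJ M' (by omega)
          nlinarith [norm_nonneg (a M')]
        · obtain ⟨L0, rfl⟩ := Nat.exists_eq_succ_of_ne_zero (Nat.pos_iff_ne_zero.mp hLpos)
          have hqval : Sfun (⇑a) q.1 = rowVal (⇑a) M L0 := by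
            rw [hML, Sfun_eval]
          rw [hqval]
          have := norm_rowVal_le htail L0
          linarith

def Smap (a : C₀(ℕ, 𝕜)) : C(Icc2, 𝕜) := ⟨fun p => Sfun (⇑a) p.1, Smap_continuous a⟩

open RCLike ComplexConjugate

variable {𝕜 : Type*} [RCLike 𝕜]

lemma normsq_expand (x y : 𝕜) : ‖x + y‖^2 = ‖x‖^2 + 2 * re (conj x * y) + ‖y‖^2 := by
  have h := norm_add_sq (𝕜 := 𝕜) x y
  simp [RCLike.inner_apply] at h ⊢
  linear_combination h

lemma norm_le_re_add_im (z : 𝕜) : ‖z‖ ≤ |re z| + |im z| := by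
  have h := RCLike.norm_sq_eq_def (z := z)
  nlinarith [abs_nonneg (re z), abs_nonneg (im z), norm_nonneg z, sq_abs (re z), sq_abs (im z),
    sq_nonneg (|re z| + |im z| - ‖z‖), sq_nonneg (|re z| - |im z|)]

lemma im_eq_zero_of_I_eq_zero (h : (I : 𝕜) = 0) (z : 𝕜) : im z = 0 := by
  have h2 := re_add_im z
  rw [h, mul_zero, add_zero] at h2
  rw [← h2, ofReal_im]

lemma norm_le_of_re_bounds {z : 𝕜} {B : ℝ} (hB : 0 ≤ B)
    (h1 : |re (((2⁻¹:ℝ):𝕜) * z)| ≤ B) (h2 : |re ((RCLike.I * ((2⁻¹:ℝ):𝕜)) * z)| ≤ B) :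
    ‖z‖ ≤ 4*B := by
  have hre : |re z| ≤ 2*B := by
    have : re (((2⁻¹:ℝ):𝕜) * z) = 2⁻¹ * re z := by
      rw [mul_re, ofReal_re, ofReal_im]; ring
    rw [this, abs_mul] at h1
    rw [abs_of_nonneg (by norm_num : (0:ℝ) ≤ 2⁻¹)] at h1
    linarith
  have him : |im z| ≤ 2*B := by
    rcases I_mul_I_ax (K := 𝕜) with h0 | hI
    · rw [im_eq_zero_of_I_eq_zero h0 z, abs_zero]; linarith
    · have h4 : re ((I:𝕜) * I) = - (im (I:𝕜) * im (I:𝕜)) := by rw [mul_re, I_re]; ring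
      rw [hI] at h4
      have h5 : re ((-1:𝕜)) = (-1:ℝ) := by simp
      have hIim : im (I : 𝕜) * im (I : 𝕜) = 1 := by rw [h5] at h4; linarith
      have hcalc : re ((RCLike.I * ((2⁻¹:ℝ):𝕜)) * z) = -(im (I:𝕜) * (2⁻¹ * im z)) := by
        rw [mul_assoc, mul_re, I_re]
        have h3 : im (((2⁻¹:ℝ):𝕜) * z) = 2⁻¹ * im z := by
          rw [mul_im, ofReal_re, ofReal_im]; ring
        rw [h3]; ring
      rw [hcalc, abs_neg, abs_mul, abs_mul] at h2
      have habs : |im (I:𝕜)| = 1 := by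
        have := abs_mul_abs_self (im (I:𝕜))
        nlinarith [abs_nonneg (im (I:𝕜))]
      rw [habs, one_mul, abs_of_nonneg (by norm_num : (0:ℝ) ≤ 2⁻¹)] at h2
      linarith
  calc ‖z‖ ≤ |re z| + |im z| := norm_le_re_add_im z
    _ ≤ 4*B := by linarith

set_option maxHeartbeats 1000000 in
lemma reBound {A δ : ℝ} {x y x' y' c : 𝕜} (hδ : 0 ≤ δ) (hA : 0 ≤ A)
    (hc : ‖c‖ ≤ 2⁻¹)
    (hx : ‖x‖ ≤ 9/8*A) (hy : ‖y‖ ≤ 9/8*A) (hx' : ‖x'‖ ≤ 9/8*A) (hy' : ‖y'‖ ≤ 9/8*A)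
    (hxx : |‖x‖ - ‖x'‖| ≤ δ) (hyy : |‖y‖ - ‖y'‖| ≤ δ)
    (hm : |‖x + c*y‖ - ‖x' + c*y'‖| ≤ 3/2*δ) :
    |re (c * (conj x * y - conj x' * y'))| ≤ 4*A*δ := by
  have e1 : ‖x + c*y‖^2 - ‖x' + c*y'‖^2
      = (‖x‖^2 - ‖x'‖^2) + (‖c*y‖^2 - ‖c*y'‖^2)
        + 2 * re (c * (conj x * y - conj x' * y')) := by
    rw [normsq_expand, normsq_expand]
    have hrw1 : conj x * (c*y) = c * (conj x * y) := by ring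
    have hrw2 : conj x' * (c*y') = c * (conj x' * y') := by ring
    rw [hrw1, hrw2, _root_.mul_sub, map_sub]
    ring
  set Z := re (c * (conj x * y - conj x' * y')) with hZ
  have hn1 : ‖x + c*y‖ ≤ 27/16*A := by
    calc ‖x + c*y‖ ≤ ‖x‖ + ‖c‖*‖y‖ := by rw [← norm_mul]; exact norm_add_le _ _
      _ ≤ 27/16*A := by nlinarith [norm_nonneg (y : 𝕜), norm_nonneg (c : 𝕜)]
  have hn2 : ‖x' + c*y'‖ ≤ 27/16*A := by
    calc ‖x' + c*y'‖ ≤ ‖x'‖ + ‖c‖*‖y'‖ := by rw [← norm_mul]; exact norm_add_le _ _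
      _ ≤ 27/16*A := by nlinarith [norm_nonneg (y' : 𝕜), norm_nonneg (c : 𝕜)]
  have h1 : |‖x + c*y‖^2 - ‖x' + c*y'‖^2| ≤ 3/2*δ * (27/8*A) := by
    have hfac : ‖x + c*y‖^2 - ‖x' + c*y'‖^2
        = (‖x + c*y‖ - ‖x' + c*y'‖) * (‖x + c*y‖ + ‖x' + c*y'‖) := by ring
    rw [hfac, abs_mul]
    have hsum : |‖x + c*y‖ + ‖x' + c*y'‖| ≤ 27/8*A := by
      rw [abs_of_nonneg (by positivity)]
      linarith
    exact mul_le_mul hm hsum (abs_nonneg _) (by positivity)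
  have h2 : |‖x‖^2 - ‖x'‖^2| ≤ δ * (9/4*A) := by
    have hfac : ‖x‖^2 - ‖x'‖^2 = (‖x‖ - ‖x'‖) * (‖x‖ + ‖x'‖) := by ring
    rw [hfac, abs_mul]
    have hsum : |‖x‖ + ‖x'‖| ≤ 9/4*A := by
      rw [abs_of_nonneg (by positivity)]; linarith
    exact mul_le_mul hxx hsum (abs_nonneg _) hδ
  have h3 : |‖c*y‖^2 - ‖c*y'‖^2| ≤ δ * (9/16*A) := by
    rw [norm_mul, norm_mul]
    have hfac : (‖c‖*‖y‖)^2 - (‖c‖*‖y'‖)^2 = ‖c‖^2 * ((‖y‖ - ‖y'‖) * (‖y‖ + ‖y'‖)) := by ring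
    rw [hfac, abs_mul, abs_mul]
    have hc2 : |‖c‖^2| ≤ 4⁻¹ := by
      rw [abs_of_nonneg (by positivity)]
      nlinarith [norm_nonneg c]
    have hsum : |‖y‖ + ‖y'‖| ≤ 9/4*A := by
      rw [abs_of_nonneg (by positivity)]; linarith
    calc |‖c‖^2| * (|‖y‖ - ‖y'‖| * |‖y‖ + ‖y'‖|)
        ≤ 4⁻¹ * (δ * (9/4*A)) := by
          apply mul_le_mul hc2 _ (by positivity) (by norm_num)
          exact mul_le_mul hyy hsum (abs_nonneg _) hδ
      _ = δ * (9/16*A) := by ring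
  have e2 : 2*Z = (‖x + c*y‖^2 - ‖x' + c*y'‖^2) - (‖x‖^2 - ‖x'‖^2) - (‖c*y‖^2 - ‖c*y'‖^2) := by
    linarith [e1]
  have habs : |2*Z| ≤ 3/2*δ * (27/8*A) + δ * (9/4*A) + δ * (9/16*A) := by
    rw [e2]
    calc |(‖x + c*y‖^2 - ‖x' + c*y'‖^2) - (‖x‖^2 - ‖x'‖^2) - (‖c*y‖^2 - ‖c*y'‖^2)|
        ≤ |(‖x + c*y‖^2 - ‖x' + c*y'‖^2) - (‖x‖^2 - ‖x'‖^2)| + |‖c*y‖^2 - ‖c*y'‖^2| :=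
          abs_sub _ _
      _ ≤ (|‖x + c*y‖^2 - ‖x' + c*y'‖^2| + |‖x‖^2 - ‖x'‖^2|) + |‖c*y‖^2 - ‖c*y'‖^2| := by
          gcongr
          exact abs_sub _ _
      _ ≤ 3/2*δ * (27/8*A) + δ * (9/4*A) + δ * (9/16*A) := by linarith
  rw [abs_mul, abs_of_nonneg (by norm_num : (0:ℝ) ≤ 2)] at habs
  nlinarith [habs]

open scoped ZeroAtInfty
open RCLike ComplexConjugate
variable {𝕜 : Type*} [RCLike 𝕜]

/-- Two-coordinate stability: if coordinate `u` is aligned and large, coordinate `v` aligns. -/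
lemma twoCoord {A δ : ℝ} {u v u' v' : 𝕜} (hδ : 0 ≤ δ) (hA8 : 8*δ < A)
    (hu : ‖u‖ ≤ A) (hv : ‖v‖ ≤ A) (hu' : ‖u'‖ ≤ A+δ) (hv' : ‖v'‖ ≤ A+δ)
    (huu : ‖u - u'‖ ≤ δ) (hvv : |‖v‖ - ‖v'‖| ≤ δ) (hu34 : 3/4*A ≤ ‖u‖)
    (hz : ‖conj u * v - conj u' * v'‖ ≤ 16*A*δ) :
    ‖v - v'‖ ≤ 24*δ := by
  have hA : 0 ≤ A := by linarith
  have key : ‖u‖ * ‖v - v'‖ ≤ 18*A*δ := by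
    have e1 : conj u * v - conj u * v' = (conj u * v - conj u' * v') + (conj u' - conj u) * v' := by
      ring
    have h2 : ‖(conj u' - conj u) * v'‖ ≤ δ * (A+δ) := by
      rw [norm_mul]
      have : ‖conj u' - conj u‖ = ‖u - u'‖ := by
        rw [← map_sub, RCLike.norm_conj, norm_sub_rev]
      rw [this]
      exact mul_le_mul huu hv' (norm_nonneg _) hδ
    calc ‖u‖ * ‖v - v'‖ = ‖conj u‖ * ‖v - v'‖ := by rw [norm_conj]
      _ = ‖conj u * (v - v')‖ := (norm_mul _ _).symm
      _ = ‖conj u * v - conj u * v'‖ := by rw [_root_.mul_sub]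
      _ ≤ ‖conj u * v - conj u' * v'‖ + ‖(conj u' - conj u) * v'‖ := by
          rw [e1]; exact norm_add_le _ _
      _ ≤ 16*A*δ + δ * (A+δ) := by linarith
      _ ≤ 18*A*δ := by nlinarith
  nlinarith [norm_nonneg (v - v'), key]

variable {𝕜 : Type*} [RCLike 𝕜]

lemma c0_norm_coe (a : C₀(ℕ, 𝕜)) (i : ℕ) : ‖a i‖ ≤ ‖a‖ := by
  rw [← ZeroAtInftyContinuousMap.norm_toBCF_eq_norm]
  exact a.toBCF.norm_coe_le_norm i

lemma c0_norm_le (a : C₀(ℕ, 𝕜)) {C : ℝ} (hC : 0 ≤ C) (h : ∀ i, ‖a i‖ ≤ C) : ‖a‖ ≤ C := by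
  rw [← ZeroAtInftyContinuousMap.norm_toBCF_eq_norm]
  exact (BoundedContinuousFunction.norm_le hC).mpr h

lemma norm_half : ‖(((2:ℝ)⁻¹:ℝ):𝕜)‖ ≤ 2⁻¹ := by
  rw [RCLike.norm_ofReal, abs_of_nonneg (by norm_num : (0:ℝ) ≤ 2⁻¹)]

lemma norm_Ihalf : ‖(RCLike.I * ((2⁻¹:ℝ):𝕜))‖ ≤ 2⁻¹ := by
  rw [norm_mul, RCLike.norm_ofReal, abs_of_nonneg (by norm_num : (0:ℝ) ≤ 2⁻¹)]
  nlinarith [norm_I_le_one (𝕜 := 𝕜), norm_nonneg (RCLike.I : 𝕜)]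

set_option maxHeartbeats 1000000 in
lemma seqSPR (a b : C₀(ℕ, 𝕜)) {δ : ℝ} (hδ : 0 ≤ δ)
    (h1 : ∀ i, |‖a i‖ - ‖b i‖| ≤ δ)
    (h2 : ∀ i j, i < j →
      (|‖a i + ((2⁻¹:ℝ):𝕜) * a j‖ - ‖b i + ((2⁻¹:ℝ):𝕜) * b j‖| ≤ 3/2*δ ∧
       |‖a i + (RCLike.I * ((2⁻¹:ℝ):𝕜)) * a j‖ - ‖b i + (RCLike.I * ((2⁻¹:ℝ):𝕜)) * b j‖| ≤ 3/2*δ)) :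
    ∃ l : 𝕜, ‖l‖ = 1 ∧ ∀ i, ‖a i - l * b i‖ ≤ 24*δ := by
  set A := ‖a‖ with hAdef
  have hA0 : 0 ≤ A := norm_nonneg a
  have hAi : ∀ i, ‖a i‖ ≤ A := fun i => c0_norm_coe a i
  have hBi : ∀ i, ‖b i‖ ≤ A + δ := by
    intro i
    have h := abs_le.mp (h1 i)
    linarith [hAi i, h.1, h.2]
  by_cases hbig : A ≤ 8*δ
  · refine ⟨1, norm_one, fun i => ?_⟩
    calc ‖a i - 1 * b i‖ ≤ ‖a i‖ + ‖b i‖ := by rw [one_mul]; exact norm_sub_le _ _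
      _ ≤ 24*δ := by linarith [hAi i, hBi i]
  · push_neg at hbig
    have hApos : 0 < A := by linarith
    obtain ⟨i0, hi0⟩ : ∃ i0, 3/4*A ≤ ‖a i0‖ := by
      by_contra hcon
      push_neg at hcon
      have : ‖a‖ ≤ 3/4*A := c0_norm_le a (by linarith) (fun i => (hcon i).le)
      rw [← hAdef] at this
      linarith
    have hb0 : 3/8*A ≤ ‖b i0‖ := by
      have h := abs_le.mp (h1 i0)
      linarith [h.1, h.2]
    have hbne : b i0 ≠ 0 := by
      intro h
      rw [h, norm_zero] at hb0
      linarith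
    have hane : a i0 ≠ 0 := by
      intro h
      rw [h, norm_zero] at hi0
      linarith
    have hna : ‖a i0‖ ≠ 0 := norm_ne_zero_iff.mpr hane
    have hnb : ‖b i0‖ ≠ 0 := norm_ne_zero_iff.mpr hbne
    have hca : ((‖a i0‖:ℝ) : 𝕜) ≠ 0 := by exact_mod_cast hna
    have hcb : ((‖b i0‖:ℝ) : 𝕜) ≠ 0 := by exact_mod_cast hnb
    set l : 𝕜 := (a i0 * conj (b i0)) / ((‖a i0‖ : 𝕜) * (‖b i0‖ : 𝕜)) with hl
    have hnorml : ‖l‖ = 1 := by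
      rw [hl, norm_div, norm_mul, norm_mul, RCLike.norm_conj, RCLike.norm_ofReal,
        RCLike.norm_ofReal, abs_of_nonneg (norm_nonneg _), abs_of_nonneg (norm_nonneg _)]
      field_simp
    have hlb : l * b i0 = a i0 * (‖b i0‖ : 𝕜) / (‖a i0‖ : 𝕜) := by
      rw [eq_div_iff hca, hl]
      have hconj : conj (b i0) * b i0 = ((‖b i0‖:𝕜))^2 := by
        rw [mul_comm]; exact RCLike.mul_conj (b i0)
      field_simp
      linear_combination hconj
    have halign : ‖a i0 - l * b i0‖ ≤ δ := by
      have hdiff : a i0 - l * b i0 = a i0 * (((1 - ‖b i0‖ / ‖a i0‖ : ℝ)) : 𝕜) := by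
        rw [hlb]
        push_cast
        field_simp
      rw [hdiff, norm_mul, RCLike.norm_ofReal]
      have heq : ‖a i0‖ * |1 - ‖b i0‖ / ‖a i0‖| = |‖a i0‖ - ‖b i0‖| := by
        rw [← abs_of_nonneg (norm_nonneg (a i0)), ← abs_mul]
        congr 1
        field_simp
        rw [abs_of_nonneg (norm_nonneg _)]
      rw [heq]
      exact h1 i0
    have hnl : ∀ j, ‖l * b j‖ = ‖b j‖ := fun j => by rw [norm_mul, hnorml, one_mul]
    have main : ∀ u v : ℕ, u < v →
        ‖conj (a u) * (a v) - conj (l * b u) * (l * b v)‖ ≤ 16*A*δ := by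
      intro u v huv
      have hpair := h2 u v huv
      have hR1 := reBound (x := a u) (y := a v) (x' := l * b u) (y' := l * b v)
        (c := ((2⁻¹:ℝ):𝕜)) hδ hA0 norm_half
        (by linarith [hAi u]) (by linarith [hAi v])
        (by rw [hnl u]; linarith [hBi u])
        (by rw [hnl v]; linarith [hBi v])
        (by rw [hnl u]; exact h1 u)
        (by rw [hnl v]; exact h1 v)
        (by
          have he : l * b u + ((2⁻¹:ℝ):𝕜) * (l * b v) = l * (b u + ((2⁻¹:ℝ):𝕜) * b v) := by ring
          rw [he, norm_mul, hnorml, one_mul]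
          exact hpair.1)
      have hR2 := reBound (x := a u) (y := a v) (x' := l * b u) (y' := l * b v)
        (c := (RCLike.I * ((2⁻¹:ℝ):𝕜))) hδ hA0 norm_Ihalf
        (by linarith [hAi u]) (by linarith [hAi v])
        (by rw [hnl u]; linarith [hBi u])
        (by rw [hnl v]; linarith [hBi v])
        (by rw [hnl u]; exact h1 u)
        (by rw [hnl v]; exact h1 v)
        (by
          have he : l * b u + (RCLike.I * ((2⁻¹:ℝ):𝕜)) * (l * b v)
              = l * (b u + (RCLike.I * ((2⁻¹:ℝ):𝕜)) * b v) := by ring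
          rw [he, norm_mul, hnorml, one_mul]
          exact hpair.2)
      have hfin := norm_le_of_re_bounds (by positivity) hR1 hR2
      linarith
    refine ⟨l, hnorml, fun i => ?_⟩
    rcases lt_trichotomy i i0 with hlt | heq | hgt
    · have hz := main i i0 hlt
      have hzflip : ‖conj (a i0) * (a i) - conj (l * b i0) * (l * b i)‖ ≤ 16*A*δ := by
        have hconjeq : conj (conj (a i) * (a i0) - conj (l * b i) * (l * b i0))
            = conj (a i0) * (a i) - conj (l * b i0) * (l * b i) := by
          rw [map_sub, map_mul, map_mul, RCLike.conj_conj, RCLike.conj_conj]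
          ring
        rw [← hconjeq, RCLike.norm_conj]
        exact hz
      exact twoCoord (u := a i0) (v := a i) (u' := l * b i0) (v' := l * b i)
        hδ hbig (hAi i0) (hAi i)
        (by rw [hnl i0]; exact hBi i0)
        (by rw [hnl i]; exact hBi i)
        halign
        (by rw [hnl i]; exact h1 i)
        hi0 hzflip
    · rw [heq]
      linarith [halign]
    · exact twoCoord (u := a i0) (v := a i) (u' := l * b i0) (v' := l * b i)
        hδ hbig (hAi i0) (hAi i)
        (by rw [hnl i0]; exact hBi i0)
        (by rw [hnl i]; exact hBi i)
        halign
        (by rw [hnl i]; exact h1 i)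
        hi0 (main i0 i hgt)

section KtopA
open Ordinal Set
variable {K : Type*} [TopologicalSpace K] [CompactSpace K] [T2Space K]

lemma scattered_totallyDisconnected (hscat : ¬∃ P : Set K, P.Nonempty ∧ Perfect P) :
    TotallyDisconnectedSpace K := by
  constructor
  intro t _ ht
  by_contra hcon
  rw [Set.not_subsingleton_iff] at hcon
  obtain ⟨x, hx, y, hy, hxy⟩ := hcon
  refine hscat ⟨closure t, ⟨x, subset_closure hx⟩, isClosed_closure, ?_⟩
  intro z hz
  rw [accPt_iff_nhds]
  intro Un hUn
  by_contra hc
  push_neg at hc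
  obtain ⟨V, hVU, hVopen, hzV⟩ := mem_nhds_iff.mp hUn
  have hP : IsPreconnected (closure t) := ht.closure
  have h1 : closure t ⊆ V ∪ {z}ᶜ := by
    intro w hw
    by_cases hwz : w = z
    · exact Or.inl (hwz ▸ hzV)
    · exact Or.inr hwz
  have h2 : (closure t ∩ V).Nonempty := ⟨z, hz, hzV⟩
  have h3 : (closure t ∩ {z}ᶜ).Nonempty := by
    by_cases hxz : x = z
    · refine ⟨y, subset_closure hy, ?_⟩
      simp only [mem_compl_iff, mem_singleton_iff]
      rw [← hxz]
      exact fun h => hxy h.symm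
    · exact ⟨x, subset_closure hx, hxz⟩
  obtain ⟨w, hw1, hw2, hw3⟩ := hP V {z}ᶜ hVopen (isClosed_singleton.isOpen_compl) h1 h2 h3
  have : w = z := by
    have := hc w ⟨hVU hw2, hw1⟩
    exact this
  exact hw3 this

variable [TotallySeparatedSpace K]

lemma clopen_step {W S : Set K} (hW : IsClopen W) (hinf : (W ∩ S).Infinite) :
    ∃ A : Set K, IsClopen A ∧ A ⊆ W ∧ (A ∩ S).Infinite ∧ ((W \ A) ∩ S).Nonempty := by
  obtain ⟨x, hx, y, hy, hxy⟩ := hinf.nontrivial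
  obtain ⟨Uc, hUc, hxU, hyU⟩ := exists_isClopen_of_totally_separated hxy
  by_cases hcase : ((W ∩ Uc) ∩ S).Infinite
  · refine ⟨W ∩ Uc, hW.inter hUc, inter_subset_left, hcase, ⟨y, ⟨⟨hy.1, ?_⟩, hy.2⟩⟩⟩
    intro h
    exact hyU h.2
  · refine ⟨W \ Uc, hW.diff hUc, diff_subset, ?_, ?_⟩
    · have hsub : (W ∩ S) ⊆ ((W ∩ Uc) ∩ S) ∪ ((W \ Uc) ∩ S) := by
        intro w hw
        by_cases hwU : w ∈ Uc
        · exact Or.inl ⟨⟨hw.1, hwU⟩, hw.2⟩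
        · exact Or.inr ⟨⟨hw.1, hwU⟩, hw.2⟩
      intro hfin
      rw [Set.not_infinite] at hcase
      exact hinf ((hcase.union hfin).subset hsub)
    · refine ⟨x, ⟨?_, hx.2⟩⟩
      refine ⟨hx.1, ?_⟩
      intro hmem
      exact hmem.2 hxU

lemma clopen_chain {S W0 : Set K} (h0 : IsClopen W0) (hinf : (W0 ∩ S).Infinite) :
    ∃ W : ℕ → Set K, W 0 = W0 ∧ (∀ n, IsClopen (W n)) ∧ (∀ n, W (n+1) ⊆ W n) ∧
      (∀ n, (W n ∩ S).Infinite) ∧ (∀ n, ((W n \ W (n+1)) ∩ S).Nonempty) := by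
  have step := fun (W : {W : Set K // IsClopen W ∧ (W ∩ S).Infinite}) =>
    clopen_step W.2.1 W.2.2
  choose F hF1 hF2 hF3 hF4 using step
  let g : {W : Set K // IsClopen W ∧ (W ∩ S).Infinite} →
      {W : Set K // IsClopen W ∧ (W ∩ S).Infinite} :=
    fun W => ⟨F W, hF1 W, hF3 W⟩
  let Ws : ℕ → {W : Set K // IsClopen W ∧ (W ∩ S).Infinite} := fun n => g^[n] ⟨W0, h0, hinf⟩
  have hsucc : ∀ n, Ws (n+1) = g (Ws n) := fun n => Function.iterate_succ_apply' g n _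
  refine ⟨fun n => (Ws n).1, rfl, fun n => (Ws n).2.1, ?_, fun n => (Ws n).2.2, ?_⟩
  · intro n
    show (Ws (n+1)).1 ⊆ (Ws n).1
    rw [hsucc n]
    exact hF2 (Ws n)
  · intro n
    have h := hF4 (Ws n)
    show (((Ws n).1 \ (Ws (n+1)).1) ∩ S).Nonempty
    rw [hsucc n]
    exact h

end KtopA

section KtopB
variable {K : Type*} [TopologicalSpace K] [CompactSpace K] [T2Space K] [TotallySeparatedSpace K]
open Ordinal Set

lemma exists_phi (hinf : (derivedSet (Set.univ : Set K)).Infinite) :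
    ∃ φ : K → Ordinal.{0}, Continuous φ ∧ (∀ x, 1 ≤ φ x ∧ φ x ≤ omega0 * omega0) ∧
      (∀ p : Ordinal.{0}, 1 ≤ p → p ≤ omega0 * omega0 → ∃ x, φ x = p) := by
  classical
  set D := derivedSet (Set.univ : Set K) with hD
  -- outer chain
  obtain ⟨Wo, hWo0, hWoCl, hWoDec, hWoInf, hWoNe⟩ :=
    clopen_chain (S := D) isClopen_univ (by rwa [Set.univ_inter])
  have hWoAnti : Antitone Wo := antitone_nat_of_succ_le hWoDec
  set U : ℕ → Set K := fun n => Wo n \ Wo (n+1) with hU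
  have hUclopen : ∀ n, IsClopen (U n) := fun n => (hWoCl n).diff (hWoCl (n+1))
  have hUD : ∀ n, (U n ∩ D).Nonempty := hWoNe
  have hUdisj : ∀ {m n : ℕ} {x : K}, x ∈ U m → x ∈ U n → m = n := by
    intro m n x hm hn
    by_contra hne
    rcases Nat.lt_or_ge m n with h | h
    · exact hm.2 (hWoAnti (by omega : m + 1 ≤ n) hn.1)
    · have : n < m := by omega
      exact hn.2 (hWoAnti (by omega : n + 1 ≤ m) hm.1)
  have hUinf : ∀ n, (U n).Infinite := by
    intro n
    obtain ⟨y, hyU, hyD⟩ := hUD n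
    have hacc : AccPt y (Filter.principal (Set.univ : Set K)) := hyD
    have hnb : Filter.NeBot (nhdsWithin y {y}ᶜ) := by
      have h2 := hacc
      rw [AccPt, Filter.principal_univ, inf_top_eq] at h2
      exact h2
    exact infinite_of_mem_nhds y ((hUclopen n).2.mem_nhds hyU)
  -- inner chains
  have hinner := fun n => clopen_chain (S := U n) (hUclopen n)
    (by rw [Set.inter_self]; exact hUinf n)
  choose Wi hWi0 hWiCl hWiDec hWiInf hWiNe using hinner
  have hWiAnti : ∀ n, Antitone (Wi n) := fun n => antitone_nat_of_succ_le (hWiDec n)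
  have hWiU : ∀ n k, Wi n k ⊆ U n := fun n k => (hWi0 n) ▸ hWiAnti n (Nat.zero_le k)
  set V : ℕ → ℕ → Set K := fun n k => Wi n k \ Wi n (k+1) with hV
  have hVclopen : ∀ n k, IsClopen (V n k) := fun n k => (hWiCl n k).diff (hWiCl n (k+1))
  have hVU : ∀ n k, V n k ⊆ U n := fun n k => (diff_subset).trans (hWiU n k)
  have hVne : ∀ n k, (V n k).Nonempty := by
    intro n k
    obtain ⟨y, hy, _⟩ := hWiNe n k
    exact ⟨y, hy⟩
  have hVdisj : ∀ {n j k : ℕ} {x : K}, x ∈ V n j → x ∈ V n k → j = k := by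
    intro n j k x hj hk
    by_contra hne
    rcases Nat.lt_or_ge j k with h | h
    · exact hj.2 (hWiAnti n (by omega : j + 1 ≤ k) hk.1)
    · have : k < j := by omega
      exact hk.2 (hWiAnti n (by omega : k + 1 ≤ j) hj.1)
  have hVWi : ∀ {n k m : ℕ} {x : K}, x ∈ V n k → x ∈ Wi n m → m ≤ k := by
    intro n k m x hv hw
    by_contra hgt
    exact hv.2 (hWiAnti n (by omega : k + 1 ≤ m) hw)
  -- points avoiding everything
  obtain ⟨zinf, hzinf⟩ : (⋂ n, Wo n).Nonempty := by
    apply IsCompact.nonempty_iInter_of_sequence_nonempty_isCompact_isClosed Wo hWoDec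
    · exact fun n => ((hWoInf n).mono inter_subset_left).nonempty
    · exact (hWoCl 0).1.isCompact
    · exact fun n => (hWoCl n).1
  have hzinfU : ∀ n, zinf ∉ U n := by
    intro n hmem
    exact hmem.2 (Set.mem_iInter.mp hzinf (n+1))
  have hrow : ∀ n, ∃ z, z ∈ U n ∧ ∀ k, z ∉ V n k := by
    intro n
    obtain ⟨z, hz⟩ : (⋂ k, Wi n k).Nonempty := by
      apply IsCompact.nonempty_iInter_of_sequence_nonempty_isCompact_isClosed (Wi n) (hWiDec n)
      · exact fun k => ((hWiInf n k).mono inter_subset_left).nonempty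
      · exact (hWiCl n 0).1.isCompact
      · exact fun k => (hWiCl n k).1
    refine ⟨z, (hWi0 n) ▸ Set.mem_iInter.mp hz 0, fun k hk => ?_⟩
    exact hk.2 (Set.mem_iInter.mp hz (k+1))
  -- residual points stay in all Wi
  have hres : ∀ {n : ℕ} {x : K}, x ∈ U n → (∀ k, x ∉ V n k) → ∀ m, x ∈ Wi n m := by
    intro n x hxU hxV m
    induction m with
    | zero => exact (hWi0 n) ▸ hxU
    | succ m ih =>
      by_contra hc
      exact hxV m ⟨ih, hc⟩
  -- the function
  set nIdx : K → ℕ := fun x => if hx : ∃ n, x ∈ U n then hx.choose else 0 with hnIdx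
  set kVal : K → Ordinal.{0} := fun x =>
    if hk : ∃ k, x ∈ V (nIdx x) k then ((hk.choose + 1 : ℕ) : Ordinal) else omega0 with hkVal
  set φ : K → Ordinal.{0} := fun x =>
    if _hx : ∃ n, x ∈ U n then omega0 * (nIdx x) + kVal x else omega0 * omega0 with hφ
  have nIdx_eq : ∀ {n : ℕ} {x : K}, x ∈ U n → nIdx x = n := by
    intro n x hx
    have hex : ∃ m, x ∈ U m := ⟨n, hx⟩
    rw [hnIdx]
    simp only [dif_pos hex]
    exact hUdisj hex.choose_spec hx
  have kVal_V : ∀ {n k : ℕ} {x : K}, x ∈ V n k → kVal x = ((k + 1 : ℕ) : Ordinal) := by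
    intro n k x hx
    have hxU : x ∈ U n := hVU n k hx
    rw [hkVal]
    simp only [nIdx_eq hxU]
    have hex : ∃ j, x ∈ V n j := ⟨k, hx⟩
    simp only [dif_pos hex]
    congr 1
    exact congrArg (· + 1) (hVdisj hex.choose_spec hx)
  have kVal_R : ∀ {n : ℕ} {x : K}, x ∈ U n → (∀ k, x ∉ V n k) → kVal x = omega0 := by
    intro n x hxU hxV
    rw [hkVal]
    simp only [nIdx_eq hxU]
    exact dif_neg (not_exists.mpr hxV)
  have φ_U : ∀ {n : ℕ} {x : K}, x ∈ U n → φ x = omega0 * n + kVal x := by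
    intro n x hx
    rw [hφ]
    simp only [dif_pos (⟨n, hx⟩ : ∃ m, x ∈ U m), nIdx_eq hx]
  have φ_Z : ∀ {x : K}, (∀ n, x ∉ U n) → φ x = omega0 * omega0 := by
    intro x hx
    rw [hφ]
    simp only [dif_neg (not_exists.mpr (fun n => hx n))]
  have kVal_ge : ∀ x, (1 : Ordinal) ≤ kVal x := by
    intro x
    simp only [hkVal]
    split
    · rw [← Nat.cast_one, Nat.cast_le]
      omega
    · exact Ordinal.one_lt_omega0.le
  have kVal_le : ∀ x, kVal x ≤ omega0 := by
    intro x
    simp only [hkVal]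
    split
    · exact (nat_lt_omega0 _).le
    · exact le_rfl
  have φrange : ∀ x, 1 ≤ φ x ∧ φ x ≤ omega0 * omega0 := by
    intro x
    by_cases hx : ∃ n, x ∈ U n
    · obtain ⟨n, hxn⟩ := hx
      rw [φ_U hxn]
      constructor
      · exact le_trans (kVal_ge x) (le_add_self)
      · calc omega0 * n + kVal x ≤ omega0 * n + omega0 := add_le_add_right (kVal_le x) _
          _ = omega0 * ((n : Ordinal) + 1) := by rw [mul_add, mul_one]
          _ ≤ omega0 * omega0 := by
              apply mul_le_mul_right
              have : ((n : Ordinal) + 1) = ((n + 1 : ℕ) : Ordinal) := by push_cast; ring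
              rw [this]
              exact (nat_lt_omega0 (n+1)).le
    · push_neg at hx
      rw [φ_Z hx]
      refine ⟨?_, le_rfl⟩
      calc (1 : Ordinal) ≤ omega0 := Ordinal.one_lt_omega0.le
        _ ≤ omega0 * omega0 := Ordinal.le_mul_left _ omega0_pos
  -- value inventory lemmas
  have valU : ∀ {n : ℕ} {y : K}, y ∈ U n →
      omega0 * n + 1 ≤ φ y ∧ φ y ≤ omega0 * n + omega0 := by
    intro n y hy
    rw [φ_U hy]
    exact ⟨add_le_add_right (kVal_ge y) _, add_le_add_right (kVal_le y) _⟩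
  have valW : ∀ {n m : ℕ} {y : K}, y ∈ Wi n m →
      (∃ k, m ≤ k ∧ φ y = omega0 * n + ((k + 1 : ℕ) : Ordinal)) ∨ φ y = omega0 * n + omega0 := by
    intro n m y hy
    have hyU : y ∈ U n := hWiU n m hy
    by_cases hk : ∃ k, y ∈ V n k
    · obtain ⟨k, hyk⟩ := hk
      left
      exact ⟨k, hVWi hyk hy, by rw [φ_U hyU, kVal_V hyk]⟩
    · push_neg at hk
      right
      rw [φ_U hyU, kVal_R hyU hk]
  have trich : ∀ x : K, (∃ n k, x ∈ V n k) ∨ (∃ n, x ∈ U n ∧ ∀ k, x ∉ V n k) ∨ (∀ n, x ∉ U n) := by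
    intro x
    by_cases hx : ∃ n, x ∈ U n
    · obtain ⟨n, hxn⟩ := hx
      by_cases hk : ∃ k, x ∈ V n k
      · obtain ⟨k, hxk⟩ := hk
        exact Or.inl ⟨n, k, hxk⟩
      · push_neg at hk
        exact Or.inr (Or.inl ⟨n, hxn, hk⟩)
    · push_neg at hx
      exact Or.inr (Or.inr hx)
  -- φ constant on V n k
  have φV : ∀ {n k : ℕ} {x : K}, x ∈ V n k → φ x = omega0 * n + ((k + 1 : ℕ) : Ordinal) := by
    intro n k x hx
    rw [φ_U (hVU n k hx), kVal_V hx]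
  have lt_succ_self : ∀ a : Ordinal.{0}, a < a + 1 := by
    intro a
    rw [Ordinal.add_one_eq_succ]
    exact Order.lt_succ a
  refine ⟨φ, ?_, φrange, ?_⟩
  · -- continuity
    have htop_eq := OrderTopology.topology_eq_generate_intervals (α := Ordinal.{0})
    rw [htop_eq]
    apply continuous_generateFrom_iff.mpr
    rintro s ⟨c, rfl | rfl⟩
    · -- preimage of Ioi c
      rw [isOpen_iff_forall_mem_open]
      intro x hx
      simp only [Set.mem_preimage, Set.mem_Ioi] at hx
      rcases trich x with ⟨n, k, hxV⟩ | ⟨n, hxU, hxV⟩ | hxZ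
      · refine ⟨V n k, ?_, (hVclopen n k).2, hxV⟩
        intro y hy
        simp only [Set.mem_preimage, Set.mem_Ioi]
        rw [φV hy, ← φV hxV]
        exact hx
      · have hφx : φ x = omega0 * n + omega0 := by rw [φ_U hxU, kVal_R hxU hxV]
        rcases lt_or_ge c (omega0 * n) with hc | hc
        · refine ⟨U n, ?_, (hUclopen n).2, hxU⟩
          intro y hy
          simp only [Set.mem_preimage, Set.mem_Ioi]
          calc c < omega0 * n := hc
            _ < omega0 * n + 1 := lt_succ_self _
            _ ≤ φ y := (valU hy).1
        · have hclt : c < omega0 * n + omega0 := by rw [← hφx]; exact hx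
          have hcd : omega0 * n + (c - omega0 * n) = c := Ordinal.add_sub_cancel_of_le hc
          have hdo : c - omega0 * n < omega0 := by
            rw [← add_lt_add_iff_left (omega0 * n), hcd]
            exact hclt
          obtain ⟨m, hm⟩ := Ordinal.lt_omega0.mp hdo
          refine ⟨Wi n m, ?_, (hWiCl n m).2, hres hxU hxV m⟩
          intro y hy
          simp only [Set.mem_preimage, Set.mem_Ioi]
          rcases valW hy with ⟨k, hmk, hφy⟩ | hφy
          · rw [hφy, ← hcd, hm]
            apply add_lt_add_right
            exact_mod_cast Nat.lt_succ_of_le hmk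
          · rw [hφy, ← hcd, hm]
            exact add_lt_add_right (nat_lt_omega0 m) _
      · have hφx : φ x = omega0 * omega0 := φ_Z hxZ
        have hco : c < omega0 * omega0 := by rw [← hφx]; exact hx
        obtain ⟨N, hN⟩ : ∃ N : ℕ, c < omega0 * N := by
          obtain ⟨c', hc', hcc⟩ := (lt_mul_iff_of_isSuccLimit isSuccLimit_omega0).mp hco
          obtain ⟨N, rfl⟩ := Ordinal.lt_omega0.mp hc'
          exact ⟨N, hcc⟩
        refine ⟨⋂ n ∈ Finset.range N, (U n)ᶜ, ?_, ?_, ?_⟩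
        · intro y hy
          simp only [Set.mem_preimage, Set.mem_Ioi]
          have hyfree : ∀ m, m < N → y ∉ U m := by
            intro m hm hymem
            have := Set.mem_iInter₂.mp hy m (Finset.mem_range.mpr hm)
            exact this hymem
          have key : ∀ m : ℕ, y ∈ U m → c < φ y := by
            intro m hym
            have hmN : N ≤ m := by
              by_contra hlt'
              exact hyfree m (by omega) hym
            calc c < omega0 * N := hN
              _ ≤ omega0 * m := mul_le_mul_right (by exact_mod_cast hmN) _
              _ < omega0 * m + 1 := lt_succ_self _
              _ ≤ φ y := (valU hym).1
          rcases trich y with ⟨m, k, hyV⟩ | ⟨m, hyU, _⟩ | hyZ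
          · exact key m (hVU m k hyV)
          · exact key m hyU
          · rw [φ_Z hyZ]
            exact hco
        · exact isOpen_biInter_finset (fun n _ => ((hUclopen n).compl).2)
        · exact Set.mem_iInter₂.mpr (fun n _ => hxZ n)
    · -- preimage of Iio c
      rw [isOpen_iff_forall_mem_open]
      intro x hx
      simp only [Set.mem_preimage, Set.mem_Iio] at hx
      rcases trich x with ⟨n, k, hxV⟩ | ⟨n, hxU, hxV⟩ | hxZ
      · refine ⟨V n k, ?_, (hVclopen n k).2, hxV⟩
        intro y hy
        simp only [Set.mem_preimage, Set.mem_Iio]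
        rw [φV hy, ← φV hxV]
        exact hx
      · refine ⟨U n, ?_, (hUclopen n).2, hxU⟩
        intro y hy
        simp only [Set.mem_preimage, Set.mem_Iio]
        have hx2 : omega0 * n + omega0 < c := by
          rw [φ_U hxU, kVal_R hxU hxV] at hx
          exact hx
        exact lt_of_le_of_lt (valU hy).2 hx2
      · refine ⟨Set.univ, ?_, isOpen_univ, Set.mem_univ x⟩
        intro y _
        simp only [Set.mem_preimage, Set.mem_Iio]
        have hx2 : omega0 * omega0 < c := by
          rw [φ_Z hxZ] at hx
          exact hx
        exact lt_of_le_of_lt (φrange y).2 hx2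
  · -- surjectivity
    intro p hp1 hp2
    rcases eq_or_lt_of_le hp2 with htop | hlt
    · exact ⟨zinf, by rw [φ_Z hzinfU]; exact htop.symm⟩
    · obtain ⟨N, L, hNL⟩ := ord_decomp hlt
      rcases Nat.eq_zero_or_pos L with hL0 | hLpos
      · subst hL0
        have hN0 : N ≠ 0 := by
          rintro rfl
          rw [hNL] at hp1
          simp at hp1
        obtain ⟨N', rfl⟩ := Nat.exists_eq_succ_of_ne_zero hN0
        obtain ⟨z, hzU, hzV⟩ := hrow N'
        refine ⟨z, ?_⟩
        rw [φ_U hzU, kVal_R hzU hzV, hNL]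
        push_cast
        rw [mul_add, mul_one, add_zero]
      · obtain ⟨L0, rfl⟩ := Nat.exists_eq_succ_of_ne_zero (Nat.pos_iff_ne_zero.mp hLpos)
        obtain ⟨x, hxV⟩ := hVne N L0
        refine ⟨x, ?_⟩
        rw [φV hxV, hNL]
end KtopB

section MoreSfun
open Ordinal
variable {𝕜 : Type*} [RCLike 𝕜]

lemma rowVal_add (a b : ℕ → 𝕜) (n k : ℕ) :
    rowVal (fun i => a i + b i) n k = rowVal a n k + rowVal b n k := by
  rw [rowVal, rowVal, rowVal]
  split <;> ring

lemma rowVal_smul (c : 𝕜) (a : ℕ → 𝕜) (n k : ℕ) :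
    rowVal (fun i => c * a i) n k = c * rowVal a n k := by
  rw [rowVal, rowVal]
  split <;> ring

lemma Sfun_add (a b : ℕ → 𝕜) (p : Ordinal) :
    Sfun (fun i => a i + b i) p = Sfun a p + Sfun b p := by
  rw [Sfun, Sfun, Sfun]
  split
  · split
    · ring
    · exact rowVal_add a b _ _
  · ring

lemma Sfun_smul (c : 𝕜) (a : ℕ → 𝕜) (p : Ordinal) :
    Sfun (fun i => c * a i) p = c * Sfun a p := by
  rw [Sfun, Sfun]
  split
  · split
    · ring
    · exact rowVal_smul c a _ _
  · ring

lemma Smap_mem (a : C₀(ℕ, 𝕜)) : Smap a ∈ C0sub 𝕜 := by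
  show Smap a omegaSqTop = 0
  show Sfun (⇑a) (Ordinal.omega0 ^ (2 : Ordinal)) = 0
  rw [om2_eq]
  exact Sfun_top _

def pt1 (n : ℕ) : Icc2 :=
  ⟨omega0 * n + ((1 : ℕ) : Ordinal),
    ⟨by exact_mod_cast le_add_self, by rw [om2_eq]; exact (grid_lt n 1).le⟩⟩

lemma Sfun_pt1 (a : C₀(ℕ, 𝕜)) (n : ℕ) : Sfun (⇑a) (pt1 n).1 = a n := by
  have h := Sfun_eval (⇑a) n 0
  rw [rowVal, if_pos rfl] at h
  exact h

def ptP (n q : ℕ) : Icc2 :=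
  ⟨omega0 * n + ((q + 2 : ℕ) : Ordinal),
    ⟨by
      calc (1 : Ordinal) ≤ ((q + 2 : ℕ) : Ordinal) := by exact_mod_cast Nat.le_add_left 1 (q+1)
        _ ≤ omega0 * n + ((q + 2 : ℕ) : Ordinal) := le_add_self,
      by rw [om2_eq]; exact (grid_lt n (q+2)).le⟩⟩

lemma Sfun_ptP (a : C₀(ℕ, 𝕜)) (n q : ℕ) :
    Sfun (⇑a) (ptP n q).1 = ((2/3 : ℝ) : 𝕜) * (a n + coef q * a (n + 1 + q/2)) := by
  show Sfun (⇑a) (omega0 * n + ((q + 2 : ℕ) : Ordinal)) = _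
  have h := Sfun_eval (⇑a) n (q + 1)
  rw [show (q + 1 + 1 : ℕ) = (q + 2 : ℕ) from rfl] at h
  rw [h, rowVal, if_neg (Nat.succ_ne_zero q)]
  norm_num

lemma coef_even (m : ℕ) : (coef (2*m) : 𝕜) = ((2⁻¹:ℝ):𝕜) := by
  rw [coef, if_pos (by omega), one_mul]

lemma coef_odd (m : ℕ) : (coef (2*m+1) : 𝕜) = RCLike.I * ((2⁻¹:ℝ):𝕜) := by
  rw [coef, if_neg (by omega)]

end MoreSfun

end AuxProof

/-- Let `K` be a scattered compact Hausdorff space (no nonempty perfect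
subsets) whose derived set is infinite, over real or complex scalars. Then there is a linear
isometric embedding `T : C₀[1, ω²) → C(K)` preserving moduli; consequently `C(K)` contains an
isometric copy of `c₀` that does SPR. -/
theorem scattered_modulus_preserving_embedding {𝕜 : Type*} [RCLike 𝕜]
    {K : Type*} [TopologicalSpace K] [CompactSpace K] [T2Space K]
    (hscat : ¬∃ P : Set K, P.Nonempty ∧ Perfect P)
    (hinf : (derivedSet (Set.univ : Set K)).Infinite) :
    (∃ T : (C0sub 𝕜) →ₗᵢ[𝕜] C(K, 𝕜),
      ∀ f : C0sub 𝕜, T ⟨kAbs (f : C(_, 𝕜)), kAbs_mem f⟩ = kAbs (T f)) ∧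
    ∃ J : C₀(ℕ, 𝕜) →ₗᵢ[𝕜] C(K, 𝕜), DoesSPR (LinearMap.range J.toLinearMap) := by
  classical
  haveI hTD : TotallyDisconnectedSpace K := scattered_totallyDisconnected hscat
  haveI hTS : TotallySeparatedSpace K := loc_compact_t2_tot_disc_iff_tot_sep.mp hTD
  obtain ⟨φ, hφcont, hφrange, hφsurj⟩ := exists_phi hinf
  set φC : C(K, Icc2) :=
    ⟨fun x => ⟨φ x, (hφrange x).1, by rw [om2_eq]; exact (hφrange x).2⟩,
      Continuous.subtype_mk hφcont _⟩ with hφC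
  have hsurjC : ∀ p : Icc2, ∃ x, φC x = p := by
    intro p
    obtain ⟨x, hx⟩ := hφsurj p.1 p.2.1 (by rw [← om2_eq]; exact p.2.2)
    exact ⟨x, Subtype.ext hx⟩
  have hcomp_norm : ∀ g : C(Icc2, 𝕜), ‖g.comp φC‖ = ‖g‖ := by
    intro g
    apply le_antisymm
    · refine (ContinuousMap.norm_le _ (norm_nonneg g)).mpr ?_
      intro x
      exact g.norm_coe_le_norm (φC x)
    · refine (ContinuousMap.norm_le _ (norm_nonneg _)).mpr ?_
      intro p
      obtain ⟨x, hx⟩ := hsurjC p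
      calc ‖g p‖ = ‖(g.comp φC) x‖ := by rw [ContinuousMap.comp_apply, hx]
        _ ≤ ‖g.comp φC‖ := (g.comp φC).norm_coe_le_norm x
  constructor
  · -- the embedding T
    refine ⟨⟨{ toFun := fun f => ContinuousMap.comp (f : C(Icc2, 𝕜)) φC
               map_add' := by
                 intro f g
                 ext x
                 simp
               map_smul' := by
                 intro c f
                 ext x
                 simp }, fun f => hcomp_norm (f : C(Icc2, 𝕜))⟩, ?_⟩
    intro f
    exact ContinuousMap.ext fun x => rfl
  · -- the c₀ copy doing SPR
    let Jlin : C₀(ℕ, 𝕜) →ₗ[𝕜] C(K, 𝕜) :=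
      { toFun := fun a => (Smap a).comp φC
        map_add' := by
          intro a b
          ext x
          show Sfun (⇑(a + b)) (φC x).1 = Sfun (⇑a) (φC x).1 + Sfun (⇑b) (φC x).1
          rw [show ⇑(a + b) = fun i => a i + b i from rfl]
          exact Sfun_add _ _ _
        map_smul' := by
          intro c a
          ext x
          show Sfun (⇑(c • a)) (φC x).1 = c * Sfun (⇑a) (φC x).1
          rw [show ⇑(c • a) = fun i => c * a i from rfl]
          exact Sfun_smul _ _ _ }
    have hJval : ∀ (a : C₀(ℕ, 𝕜)) (x : K), (Jlin a) x = Sfun (⇑a) (φC x).1 := fun a x => rfl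
    have hJnorm : ∀ a : C₀(ℕ, 𝕜), ‖Jlin a‖ = ‖a‖ := by
      intro a
      show ‖(Smap a).comp φC‖ = ‖a‖
      rw [hcomp_norm]
      apply le_antisymm
      · refine (ContinuousMap.norm_le _ (norm_nonneg a)).mpr ?_
        intro p
        exact norm_Sfun_le (⇑a) (c0_norm_coe a) p.1
      · refine c0_norm_le a (norm_nonneg _) ?_
        intro n
        calc ‖a n‖ = ‖Smap a (pt1 n)‖ := by
              show ‖a n‖ = ‖Sfun (⇑a) (pt1 n).1‖
              rw [Sfun_pt1]
          _ ≤ ‖Smap a‖ := (Smap a).norm_coe_le_norm _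
    refine ⟨⟨Jlin, hJnorm⟩, 24, by norm_num, ?_⟩
    intro F hF G hG
    obtain ⟨a, rfl⟩ := LinearMap.mem_range.mp hF
    obtain ⟨b, rfl⟩ := LinearMap.mem_range.mp hG
    show sprInf (Jlin a) (Jlin b) ≤ 24 * ‖cmAbs (Jlin a) - cmAbs (Jlin b)‖
    set δ := ‖cmAbs (Jlin a) - cmAbs (Jlin b)‖ with hδdef
    have hδ0 : 0 ≤ δ := norm_nonneg _
    have hpoint : ∀ p : Icc2, |‖Sfun (⇑a) p.1‖ - ‖Sfun (⇑b) p.1‖| ≤ δ := by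
      intro p
      obtain ⟨x, hx⟩ := hsurjC p
      have hval : ∀ c : C₀(ℕ, 𝕜), (Jlin c) x = Sfun (⇑c) p.1 := by
        intro c
        rw [hJval c x, hx]
      have h1 : (cmAbs (Jlin a) - cmAbs (Jlin b)) x = ‖Sfun (⇑a) p.1‖ - ‖Sfun (⇑b) p.1‖ := by
        simp only [ContinuousMap.sub_apply]
        show ‖(Jlin a) x‖ - ‖(Jlin b) x‖ = _
        rw [hval a, hval b]
      calc |‖Sfun (⇑a) p.1‖ - ‖Sfun (⇑b) p.1‖|
          = ‖(cmAbs (Jlin a) - cmAbs (Jlin b)) x‖ := by rw [h1, Real.norm_eq_abs]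
        _ ≤ δ := (cmAbs (Jlin a) - cmAbs (Jlin b)).norm_coe_le_norm x
    have h1seq : ∀ i, |‖a i‖ - ‖b i‖| ≤ δ := by
      intro i
      have h := hpoint (pt1 i)
      rw [Sfun_pt1, Sfun_pt1] at h
      exact h
    have hmeas : ∀ i q : ℕ,
        |‖a i + coef q * a (i + 1 + q/2)‖ - ‖b i + coef q * b (i + 1 + q/2)‖| ≤ 3/2 * δ := by
      intro i q
      have h := hpoint (ptP i q)
      rw [Sfun_ptP, Sfun_ptP, norm_mul, norm_mul, norm_two_thirds] at h
      set X := ‖a i + coef q * a (i + 1 + q/2)‖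
      set Y := ‖b i + coef q * b (i + 1 + q/2)‖
      have h2 : |X - Y| = (3/2 : ℝ) * |2/3 * X - 2/3 * Y| := by
        rw [show (2/3 : ℝ) * X - 2/3 * Y = (2/3) * (X - Y) by ring, abs_mul,
          abs_of_nonneg (by norm_num : (0:ℝ) ≤ (2/3:ℝ))]
        ring
      rw [h2]
      have := mul_le_mul_of_nonneg_left h (by norm_num : (0:ℝ) ≤ 3/2)
      linarith
    have h2seq : ∀ i j, i < j →
        (|‖a i + ((2⁻¹:ℝ):𝕜) * a j‖ - ‖b i + ((2⁻¹:ℝ):𝕜) * b j‖| ≤ 3/2*δ ∧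
         |‖a i + (RCLike.I * ((2⁻¹:ℝ):𝕜)) * a j‖ - ‖b i + (RCLike.I * ((2⁻¹:ℝ):𝕜)) * b j‖| ≤ 3/2*δ) := by
      intro i j hij
      constructor
      · have h := hmeas i (2*(j - i - 1))
        rw [coef_even, show i + 1 + (2*(j - i - 1))/2 = j by omega] at h
        exact h
      · have h := hmeas i (2*(j - i - 1) + 1)
        rw [coef_odd, show i + 1 + (2*(j - i - 1) + 1)/2 = j by omega] at h
        exact h
    obtain ⟨l, hl, hli⟩ := seqSPR a b hδ0 h1seq h2seq
    have hnorm : ‖a - l • b‖ ≤ 24 * δ := by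
      refine c0_norm_le _ (by positivity) ?_
      intro i
      show ‖a i - l * b i‖ ≤ 24 * δ
      exact hli i
    have hIle : sprInf (Jlin a) (Jlin b) ≤ ‖Jlin a - l • Jlin b‖ := by
      have hbdd : BddBelow (Set.range fun c : {c : 𝕜 // ‖c‖ = 1} => ‖Jlin a - (c : 𝕜) • Jlin b‖) := by
        refine ⟨0, ?_⟩
        rintro r ⟨u, rfl⟩
        exact norm_nonneg _
      exact ciInf_le hbdd (⟨l, hl⟩ : {c : 𝕜 // ‖c‖ = 1})
    calc sprInf (Jlin a) (Jlin b) ≤ ‖Jlin a - l • Jlin b‖ := hIle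
      _ = ‖Jlin (a - l • b)‖ := by rw [map_sub, map_smul]
      _ = ‖a - l • b‖ := hJnorm _
      _ ≤ 24 * δ := hnorm

end
end

section
/- Let K be a compact Hausdorff space whose derived set K′ is finite, and let the scalar field be 𝕜 ∈ {ℝ, ℂ}. Then for every infinite-dimensional linear subspace E of C(K) and every ε > 0 there exist f, g ∈ E with ‖f‖ = ‖g‖ = 1 and ‖min(|f|, |g|)‖ ≤ ε (the minimum taken pointwise of the moduli). Consequently, no infinite-dimensional subspace of C(K) does SPR. -/
open scoped ZeroAtInfty

noncomputable section

@[simp] lemma cmAbs_apply {K : Type*} [TopologicalSpace K] {𝕜 : Type*} [RCLike 𝕜]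
    (f : C(K, 𝕜)) (x : K) : cmAbs f x = ‖f x‖ := rfl

lemma norm_add_lower {G : Type*} [SeminormedAddCommGroup G] (x y : G) :
    ‖x‖ - ‖y‖ ≤ ‖x + y‖ := by
  have h := norm_add_le (x + y) (-y)
  simp only [add_neg_cancel_right, norm_neg] at h
  linarith

lemma four_ineq {G : Type*} [SeminormedAddCommGroup G] (a b : G) :
    |‖a + b‖ - ‖a - b‖| ≤ 2 * min ‖a‖ ‖b‖ := by
  rcases le_total ‖a‖ ‖b‖ with h | h
  · rw [min_eq_left h]
    calc |‖a + b‖ - ‖a - b‖| = |‖a + b‖ - ‖b - a‖| := by rw [norm_sub_rev a b]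
      _ ≤ ‖(a + b) - (b - a)‖ := abs_norm_sub_norm_le _ _
      _ = ‖a + a‖ := by rw [show (a + b) - (b - a) = a + a by abel]
      _ ≤ ‖a‖ + ‖a‖ := norm_add_le _ _
      _ = 2 * ‖a‖ := by ring
  · rw [min_eq_right h]
    calc |‖a + b‖ - ‖a - b‖| ≤ ‖(a + b) - (a - b)‖ := abs_norm_sub_norm_le _ _
      _ = ‖b + b‖ := by rw [show (a + b) - (a - b) = b + b by abel]
      _ ≤ ‖b‖ + ‖b‖ := norm_add_le _ _
      _ = 2 * ‖b‖ := by ring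

lemma exists_ne_zero_vanishing {𝕜 : Type*} [RCLike 𝕜] {K : Type*} [TopologicalSpace K]
    [CompactSpace K] (E : Submodule 𝕜 C(K, 𝕜)) (hE : ¬FiniteDimensional 𝕜 E)
    {T : Set K} (hT : T.Finite) : ∃ f ∈ E, f ≠ 0 ∧ ∀ x ∈ T, f x = 0 := by
  by_contra hcon
  push_neg at hcon
  have : Finite T := hT.to_subtype
  let Φ : E →ₗ[𝕜] (T → 𝕜) :=
    { toFun := fun f x => (f : C(K, 𝕜)) x.1
      map_add' := by intros; ext; simp
      map_smul' := by intros; ext; simp }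
  have hinj : Function.Injective Φ := by
    rw [← LinearMap.ker_eq_bot, LinearMap.ker_eq_bot']
    intro m hm
    by_contra hm0
    have hne : (m : C(K, 𝕜)) ≠ 0 := fun h => hm0 (Subtype.ext h)
    obtain ⟨x, hxT, hx⟩ := hcon (m : C(K, 𝕜)) m.2 hne
    exact hx (congrFun hm ⟨x, hxT⟩)
  exact hE (FiniteDimensional.of_injective Φ hinj)

lemma finite_superlevel {𝕜 : Type*} [RCLike 𝕜] {K : Type*} [TopologicalSpace K]
    [CompactSpace K] (f : C(K, 𝕜))
    (hf : ∀ x ∈ derivedSet (Set.univ : Set K), f x = 0) {δ : ℝ} (hδ : 0 < δ) :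
    {x | δ ≤ ‖f x‖}.Finite := by
  set S := {x | δ ≤ ‖f x‖} with hSdef
  have hScl : IsClosed S := isClosed_le continuous_const (map_continuous f).norm
  have hScomp : IsCompact S := hScl.isCompact
  have hiso : ∀ x ∈ S, IsOpen ({x} : Set K) := by
    intro x hx
    have hxd : x ∉ derivedSet (Set.univ : Set K) := by
      intro hmem
      have h0 := hf x hmem
      have : δ ≤ ‖f x‖ := hx
      rw [h0, norm_zero] at this
      linarith
    rw [derivedSet, Set.mem_setOf_eq, accPt_iff_nhds] at hxd
    push_neg at hxd
    obtain ⟨U, hU, hUsub⟩ := hxd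
    have hsub : U ⊆ {x} := fun y hy => hUsub y ⟨hy, Set.mem_univ y⟩
    obtain ⟨V, hVsub, hVopen, hxV⟩ := mem_nhds_iff.mp hU
    have : V = {x} := subset_antisymm (hVsub.trans hsub) (Set.singleton_subset_iff.mpr hxV)
    exact this ▸ hVopen
  have hcov : S ⊆ ⋃ x : S, ({(x : K)} : Set K) :=
    fun x hx => Set.mem_iUnion.mpr ⟨⟨x, hx⟩, rfl⟩
  obtain ⟨t, ht⟩ := hScomp.elim_finite_subcover (fun x : S => ({(x : K)} : Set K))
    (fun x => hiso x x.2) hcov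
  exact (t.finite_toSet.biUnion (fun i _ => Set.finite_singleton _)).subset ht

/-- If `K` is a compact Hausdorff space whose derived set is finite, with
scalars `𝕜 ∈ {ℝ, ℂ}`, then every infinite-dimensional subspace `E` of `C(K)` contains, for
every `ε > 0`, normalized `f, g` with `‖|f| ⊓ |g|‖ ≤ ε`; consequently no infinite-dimensional
subspace of `C(K)` does SPR. -/
theorem no_SPR_of_finite_derived_set {𝕜 : Type*} [RCLike 𝕜]
    {K : Type*} [TopologicalSpace K] [CompactSpace K] [T2Space K]
    (hfin : (derivedSet (Set.univ : Set K)).Finite) :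
    (∀ E : Submodule 𝕜 C(K, 𝕜), ¬FiniteDimensional 𝕜 E →
      ∀ ε : ℝ, 0 < ε → ∃ f ∈ E, ∃ g ∈ E,
        ‖f‖ = 1 ∧ ‖g‖ = 1 ∧ ‖cmAbs f ⊓ cmAbs g‖ ≤ ε) ∧
    ∀ E : Submodule 𝕜 C(K, 𝕜), ¬FiniteDimensional 𝕜 E → ¬DoesSPR E := by
  have part1 : ∀ E : Submodule 𝕜 C(K, 𝕜), ¬FiniteDimensional 𝕜 E →
      ∀ ε : ℝ, 0 < ε → ∃ f ∈ E, ∃ g ∈ E,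
        ‖f‖ = 1 ∧ ‖g‖ = 1 ∧ ∀ x : K, min ‖f x‖ ‖g x‖ ≤ ε := by
    intro E hE ε hε
    obtain ⟨f0, hf0E, hf0ne, hf0z⟩ := exists_ne_zero_vanishing E hE hfin
    have hn0 : ‖f0‖ ≠ 0 := norm_ne_zero_iff.mpr hf0ne
    set f : C(K, 𝕜) := (‖f0‖⁻¹ : 𝕜) • f0 with hfdef
    have hfE : f ∈ E := E.smul_mem _ hf0E
    have hfnorm : ‖f‖ = 1 := by
      rw [hfdef, norm_smul]
      simp [inv_mul_cancel₀ hn0]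
    have hfz : ∀ x ∈ derivedSet (Set.univ : Set K), f x = 0 := by
      intro x hx
      simp [hfdef, hf0z x hx]
    have hSfin : {x | ε ≤ ‖f x‖}.Finite := finite_superlevel f hfz hε
    obtain ⟨g0, hg0E, hg0ne, hg0z⟩ := exists_ne_zero_vanishing E hE (hfin.union hSfin)
    have hn1 : ‖g0‖ ≠ 0 := norm_ne_zero_iff.mpr hg0ne
    set g : C(K, 𝕜) := (‖g0‖⁻¹ : 𝕜) • g0 with hgdef
    have hgnorm : ‖g‖ = 1 := by
      rw [hgdef, norm_smul]
      simp [inv_mul_cancel₀ hn1]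
    refine ⟨f, hfE, g, E.smul_mem _ hg0E, hfnorm, hgnorm, ?_⟩
    intro x
    by_cases hx : ε ≤ ‖f x‖
    · have hgx : g0 x = 0 := hg0z x (Or.inr hx)
      have hgx' : g x = 0 := by simp [hgdef, hgx]
      calc min ‖f x‖ ‖g x‖ ≤ ‖g x‖ := min_le_right _ _
        _ ≤ ε := by rw [hgx', norm_zero]; exact hε.le
    · exact (min_le_left _ _).trans (le_of_not_ge hx)
  constructor
  · intro E hE ε hε
    obtain ⟨f, hfE, g, hgE, hf1, hg1, hmin⟩ := part1 E hE ε hε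
    refine ⟨f, hfE, g, hgE, hf1, hg1, ?_⟩
    rw [ContinuousMap.norm_le _ hε.le]
    intro x
    have hval : (cmAbs f ⊓ cmAbs g) x = min ‖f x‖ ‖g x‖ := rfl
    rw [hval, Real.norm_eq_abs, abs_of_nonneg (le_min (norm_nonneg _) (norm_nonneg _))]
    exact hmin x
  · rintro E hE ⟨C, hC1, hC⟩
    have hC0 : (0 : ℝ) < C := lt_of_lt_of_le one_pos hC1
    set ε : ℝ := 1 / (2 * (2 * C + 3)) with hεdef
    have hε : 0 < ε := by rw [hεdef]; positivity
    have hεone : ε < 1 := by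
      rw [hεdef, div_lt_one (by linarith)]
      linarith
    obtain ⟨f, hfE, g, hgE, hf1, hg1, hmin⟩ := part1 E hE ε hε
    set u : C(K, 𝕜) := f + g with hudef
    set v : C(K, 𝕜) := f - g with hvdef
    have hub : ‖cmAbs u - cmAbs v‖ ≤ 2 * ε := by
      rw [ContinuousMap.norm_le _ (by positivity)]
      intro x
      have hux : (cmAbs u - cmAbs v) x = ‖f x + g x‖ - ‖f x - g x‖ := by
        simp [hudef, hvdef]
      rw [hux, Real.norm_eq_abs]
      calc |‖f x + g x‖ - ‖f x - g x‖| ≤ 2 * min ‖f x‖ ‖g x‖ := four_ineq _ _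
        _ ≤ 2 * ε := by linarith [hmin x]
    have hsprle : sprInf u v < 2 * C * ε + ε := by
      calc sprInf u v ≤ C * ‖cmAbs u - cmAbs v‖ := hC u (E.add_mem hfE hgE) v (E.sub_mem hfE hgE)
        _ ≤ C * (2 * ε) := by nlinarith
        _ < 2 * C * ε + ε := by linarith
    have hne : Nonempty {c : 𝕜 // ‖c‖ = 1} := ⟨⟨1, norm_one⟩⟩
    rw [sprInf] at hsprle
    obtain ⟨l, hl⟩ := exists_lt_of_ciInf_lt hsprle
    have hlnorm : ‖(l : 𝕜)‖ = 1 := l.2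
    -- K is nonempty
    have hfne : f ≠ 0 := by
      intro h
      rw [h, norm_zero] at hf1
      exact one_ne_zero hf1.symm
    have hKne : Nonempty K := by
      by_contra h
      rw [not_nonempty_iff] at h
      exact hfne (by ext x; exact (h.false x).elim)
    -- find points where f and g attain their norms
    have hmax : ∀ w : C(K, 𝕜), ‖w‖ = 1 → ∃ x : K, ‖w x‖ = 1 := by
      intro w hw
      obtain ⟨x0, -, hx0⟩ := isCompact_univ.exists_isMaxOn Set.univ_nonempty
        ((map_continuous w).norm.continuousOn)
      refine ⟨x0, le_antisymm (hw ▸ w.norm_coe_le_norm x0) ?_⟩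
      have : ‖w‖ ≤ ‖w x0‖ :=
        (ContinuousMap.norm_le _ (norm_nonneg _)).mpr (fun y => hx0 (Set.mem_univ y))
      linarith [hw ▸ this]
    obtain ⟨x0, hfx0⟩ := hmax f hf1
    obtain ⟨x1, hgx1⟩ := hmax g hg1
    have hgx0 : ‖g x0‖ ≤ ε := by
      have := hmin x0
      rw [hfx0] at this
      rcases min_le_iff.mp this with h | h
      · linarith
      · exact h
    have hfx1 : ‖f x1‖ ≤ ε := by
      have := hmin x1
      rw [hgx1] at this
      rcases min_le_iff.mp this with h | h
      · exact h
      · linarith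
    have hsum : ‖(1 : 𝕜) + (l : 𝕜)‖ ≤ 2 := by
      calc ‖(1 : 𝕜) + (l : 𝕜)‖ ≤ ‖(1 : 𝕜)‖ + ‖(l : 𝕜)‖ := norm_add_le _ _
        _ = 2 := by rw [norm_one, hlnorm]; norm_num
    have hdiff : ‖(1 : 𝕜) - (l : 𝕜)‖ ≤ 2 := by
      calc ‖(1 : 𝕜) - (l : 𝕜)‖ ≤ ‖(1 : 𝕜)‖ + ‖(l : 𝕜)‖ := norm_sub_le _ _
        _ = 2 := by rw [norm_one, hlnorm]; norm_num
    have heval : ∀ x : K, (u - (l : 𝕜) • v) x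
        = (1 - (l : 𝕜)) * f x + (1 + (l : 𝕜)) * g x := by
      intro x
      simp only [hudef, hvdef, ContinuousMap.sub_apply, ContinuousMap.smul_apply,
        ContinuousMap.add_apply, smul_eq_mul]
      ring
    have key0 : ‖(1 : 𝕜) - (l : 𝕜)‖ - 2 * ε ≤ ‖u - (l : 𝕜) • v‖ := by
      have h2 := (u - (l : 𝕜) • v).norm_coe_le_norm x0
      rw [heval x0] at h2
      have h1 := norm_add_lower ((1 - (l : 𝕜)) * f x0) ((1 + (l : 𝕜)) * g x0)
      rw [norm_mul, norm_mul, hfx0, mul_one] at h1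
      have h3 : ‖(1 : 𝕜) + (l : 𝕜)‖ * ‖g x0‖ ≤ 2 * ε :=
        mul_le_mul hsum hgx0 (norm_nonneg _) (by norm_num)
      linarith
    have key1 : ‖(1 : 𝕜) + (l : 𝕜)‖ - 2 * ε ≤ ‖u - (l : 𝕜) • v‖ := by
      have h2 := (u - (l : 𝕜) • v).norm_coe_le_norm x1
      rw [heval x1] at h2
      have h1 := norm_add_lower ((1 + (l : 𝕜)) * g x1) ((1 - (l : 𝕜)) * f x1)
      rw [norm_mul, norm_mul, hgx1, mul_one, add_comm ((1 + (l : 𝕜)) * g x1)] at h1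
      have h3 : ‖(1 : 𝕜) - (l : 𝕜)‖ * ‖f x1‖ ≤ 2 * ε :=
        mul_le_mul hdiff hfx1 (norm_nonneg _) (by norm_num)
      linarith
    have htwo : (2 : ℝ) ≤ ‖(1 : 𝕜) - (l : 𝕜)‖ + ‖(1 : 𝕜) + (l : 𝕜)‖ := by
      have h := norm_add_le ((1 : 𝕜) - (l : 𝕜)) ((1 : 𝕜) + (l : 𝕜))
      rw [show ((1 : 𝕜) - (l : 𝕜)) + ((1 : 𝕜) + (l : 𝕜)) = 2 by ring] at h
      have h2 : ‖(2 : 𝕜)‖ = 2 := by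
        rw [show (2 : 𝕜) = ((2 : ℝ) : 𝕜) by push_cast; ring, RCLike.norm_ofReal]
        norm_num
      rw [h2] at h
      linarith
    have hfinal : 2 * (2 * C + 3) * ε = 1 := by
      rw [hεdef]
      field_simp
    linarith

end
end
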